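/- arXiv:2603.27054 — 6 statements merged into one kernel-verified Lean document; each statement's English description precedes it below -/
import Mathlib

section
/- Let f : S₁ → S₂ be a branched covering (a continuous, open, surjective map with finite fibers) from a closed surface S₁ onto a closed surface S₂, each equipped with a fixed metric inducing its topology, and let K ⊆ S₂ be a nonempty compact set. If K (with the restricted metric) is a Peano compactum, then L = f⁻¹(K) (with the restricted metric) is a Peano compactum. -/
open Set Metric Filter Topology unitInterval

/-- A space is locally euclidean of dimension 2 if every point has an open neighborhood
homeomorphic to `ℝ²`. A *closed surface* is a nonempty compact connected Hausdorff space
with this property. -/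
def IsSurfaceLocallyEuclidean (S : Type*) [TopologicalSpace S] : Prop :=
  ∀ x : S, ∃ U : Set S, IsOpen U ∧ x ∈ U ∧ Nonempty (U ≃ₜ (ℝ × ℝ))

/-- An upper semicontinuous decomposition of `K`: a partition of `K` into nonempty closed
sets such that each element `δ` and open `U ⊇ δ` admit a relatively open `V` (a union of
elements of the decomposition) with `δ ⊆ V ⊆ U`. -/
def IsUSCDecomp {X : Type*} [TopologicalSpace X] (K : Set X) (D : Set (Set X)) : Prop :=
  (∀ δ ∈ D, δ.Nonempty ∧ IsClosed δ ∧ δ ⊆ K) ∧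
  (∀ δ ∈ D, ∀ δ' ∈ D, δ ≠ δ' → Disjoint δ δ') ∧
  ⋃₀ D = K ∧
  ∀ δ ∈ D, ∀ U : Set X, IsOpen U → δ ⊆ U →
    ∃ D' ⊆ D, (∃ W : Set X, IsOpen W ∧ ⋃₀ D' = W ∩ K) ∧ δ ⊆ ⋃₀ D' ∧ ⋃₀ D' ⊆ U

/-- An upper semicontinuous decomposition into subcontinua. -/
def IsUSCDecompCont {X : Type*} [TopologicalSpace X] (K : Set X) (D : Set (Set X)) : Prop :=
  IsUSCDecomp K D ∧ ∀ δ ∈ D, IsConnected δ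

/-- The relation on `↥K` identifying two points lying in a common element of `D`. -/
def decompRel {X : Type*} (K : Set X) (D : Set (Set X)) : K → K → Prop :=
  fun x y => ∃ δ ∈ D, (x : X) ∈ δ ∧ (y : X) ∈ δ

/-- The quotient space of the decomposition `D` of `K`, with the quotient topology. -/
abbrev DecompQuot {X : Type*} [TopologicalSpace X] (K : Set X) (D : Set (Set X)) : Type _ :=
  Quot (decompRel K D)

/-- A topological space is a *Peano compactum* if it is compact, all of its connected
components are locally connected, and there is a metric inducing its topology for which,
for every `ε > 0`, at most finitely many connected components have diameter `> ε`. -/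
def IsPeanoCompactumSp (Y : Type*) [ty : TopologicalSpace Y] : Prop :=
  CompactSpace Y ∧
  (∀ y : Y, LocallyConnectedSpace (connectedComponent y)) ∧
  ∃ m : MetricSpace Y, m.toPseudoMetricSpace.toUniformSpace.toTopologicalSpace = ty ∧
    ∀ ε : ℝ, 0 < ε →
      {C : Set Y | (∃ y : Y, C = connectedComponent y) ∧
        ε < @Metric.diam Y m.toPseudoMetricSpace C}.Finite

/-- A compact subset `K` of a metric space is a Peano compactum with the restricted
metric iff all of its connected components are locally connected and for each `ε > 0`
only finitely many components have diameter `> ε`. -/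
def IsPeanoCompactumSet {X : Type*} [MetricSpace X] (K : Set X) : Prop :=
  IsCompact K ∧
  (∀ x ∈ K, LocallyConnectedSpace (connectedComponentIn K x)) ∧
  ∀ ε : ℝ, 0 < ε →
    {C : Set X | (∃ x ∈ K, C = connectedComponentIn K x) ∧ ε < Metric.diam C}.Finite

/-- A Peano decomposition: a usc decomposition into subcontinua whose quotient space
(with the quotient topology) is a Peano compactum. -/
def IsPeanoDecomp {X : Type*} [MetricSpace X] (K : Set X) (D : Set (Set X)) : Prop :=
  IsUSCDecompCont K D ∧ IsPeanoCompactumSp (DecompQuot K D)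

/-- A decomposition `D` refines `D'` if every element of `D` is contained in an
element of `D'`. -/
def Refines {X : Type*} (D D' : Set (Set X)) : Prop :=
  ∀ δ ∈ D, ∃ δ' ∈ D', δ ⊆ δ'

/-- A branched covering between closed surfaces (Stoïlow): a continuous, open,
surjective map with finite fibers. -/
def IsBranchedCovering {X Y : Type*} [TopologicalSpace X] [TopologicalSpace Y]
    (f : X → Y) : Prop :=
  Continuous f ∧ IsOpenMap f ∧ Function.Surjective f ∧ ∀ y : Y, (f ⁻¹' {y}).Finite

section AuxPeano

variable {X Y : Type*}

/-- key lemma B: every connected component of `M` meets every fiber over `C`,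
when `f` restricted to `M` is "relatively open onto `C`". -/
lemma aux_meets_fiber [TopologicalSpace X] [T2Space X] [TopologicalSpace Y] [T2Space Y]
    {f : X → Y} (hfc : Continuous f) {M : Set X} {C : Set Y}
    (hM : IsCompact M)
    (hopen : ∀ V : Set X, IsOpen V → ∃ O : Set Y, IsOpen O ∧ f '' (V ∩ M) = O ∩ C)
    (himg : f '' M ⊆ C) (hC : IsPreconnected C)
    {x : X} (hx : x ∈ M) {y : Y} (hy : y ∈ C) :
    ∃ z ∈ connectedComponentIn M x, f z = y := by
  haveI : CompactSpace M := isCompact_iff_compactSpace.mp hM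
  haveI : PreconnectedSpace C := Subtype.preconnectedSpace hC
  set x' : M := ⟨x, hx⟩ with hx'
  -- for each clopen `s ∋ x'` in `M`, `y ∈ f '' (↑s)`
  have key : ∀ s : Set M, IsClopen s → x' ∈ s → ∃ z : M, z ∈ s ∧ f ↑z = y := by
    intro s hs hxs
    obtain ⟨V, hV, hV2⟩ : ∃ V : Set X, IsOpen V ∧ Subtype.val '' s = V ∩ M := by
      obtain ⟨V, hV, rfl⟩ := isOpen_induced_iff.mp hs.2
      exact ⟨V, hV, by rw [Subtype.image_preimage_coe, inter_comm]⟩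
    obtain ⟨O, hO, hOC⟩ := hopen V hV
    -- A := f '' (↑s) is a nonempty clopen subset of C
    have hA : f '' (Subtype.val '' s) = O ∩ C := by rw [hV2, hOC]
    have hscpt : IsCompact (Subtype.val '' s) :=
      (hs.1.isCompact).image continuous_subtype_val
    have hAclosed : IsClosed (f '' (Subtype.val '' s)) := (hscpt.image hfc).isClosed
    -- pass to the subtype C
    set A' : Set C := Subtype.val ⁻¹' (f '' (Subtype.val '' s)) with hA'
    have hA'clopen : IsClopen A' := by
      constructor
      · exact hAclosed.preimage continuous_subtype_val
      · have : A' = Subtype.val ⁻¹' O := by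
          ext ⟨c, hc⟩
          simp only [hA', mem_preimage, hA, mem_inter_iff]
          exact ⟨fun h => h.1, fun h => ⟨h, hc⟩⟩
        rw [this]; exact hO.preimage continuous_subtype_val
    have hA'ne : A'.Nonempty := by
      refine ⟨⟨f x, himg ⟨x, hx, rfl⟩⟩, ?_⟩
      exact ⟨x, ⟨x', hxs, rfl⟩, rfl⟩
    have := hA'clopen.eq_univ hA'ne
    have hyA : (⟨y, hy⟩ : C) ∈ A' := this ▸ mem_univ _
    obtain ⟨w, ⟨z, hz, rfl⟩, hw⟩ := hyA
    exact ⟨z, hz, hw⟩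
  -- now intersect over all clopen sets containing x'
  set ι := { s : Set M // IsClopen s ∧ x' ∈ s }
  haveI : Nonempty ι := ⟨⟨univ, isClopen_univ, mem_univ _⟩⟩
  have hdir : Directed (· ⊇ ·) (fun s : ι => (s : Set M) ∩ (f ∘ Subtype.val) ⁻¹' {y}) := by
    intro s t
    exact ⟨⟨s.1 ∩ t.1, s.2.1.inter t.2.1, s.2.2, t.2.2⟩,
      inter_subset_inter_left _ inter_subset_left,
      inter_subset_inter_left _ inter_subset_right⟩
  have hcl : ∀ s : ι, IsClosed ((s : Set M) ∩ (f ∘ Subtype.val) ⁻¹' {y}) := fun s =>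
    s.2.1.1.inter (isClosed_singleton.preimage (hfc.comp continuous_subtype_val))
  have hne : ∀ s : ι, ((s : Set M) ∩ (f ∘ Subtype.val) ⁻¹' {y}).Nonempty := by
    intro s
    obtain ⟨z, hz, hfz⟩ := key s.1 s.2.1 s.2.2
    exact ⟨z, hz, by simpa using hfz⟩
  obtain ⟨z, hz⟩ := IsCompact.nonempty_iInter_of_directed_nonempty_isCompact_isClosed
    _ hdir hne (fun s => (hcl s).isCompact) hcl
  simp only [mem_iInter, mem_inter_iff] at hz
  have hz1 : z ∈ connectedComponent x' := by
    rw [connectedComponent_eq_iInter_isClopen x']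
    exact mem_iInter.mpr fun s => (hz s).1
  have hz2 : f ↑z = y := by simpa using (hz ⟨univ, isClopen_univ, mem_univ _⟩).2
  refine ⟨↑z, ?_, hz2⟩
  rw [connectedComponentIn_eq_image hx]
  exact ⟨z, hz1, rfl⟩


/-- (C): preimage of small closed balls around `y` shrink into any open set around the fiber. -/
lemma aux_preimage_small_ball [MetricSpace X] [CompactSpace X] [MetricSpace Y]
    {f : X → Y} (hfc : Continuous f) (y : Y) {U : Set X} (hU : IsOpen U)
    (hfib : f ⁻¹' {y} ⊆ U) :
    ∃ r > 0, f ⁻¹' (closedBall y r) ⊆ U := by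
  have hdir : Directed (· ⊇ ·) (fun n : ℕ => f ⁻¹' (closedBall y (1 / (n + 1)))) := by
    intro m n
    have h1 : (1 : ℝ) / (max m n + 1) ≤ 1 / (m + 1) := by
      apply one_div_le_one_div_of_le (by positivity)
      have : (m : ℝ) ≤ max m n := by exact_mod_cast le_max_left m n
      linarith
    have h2 : (1 : ℝ) / (max m n + 1) ≤ 1 / (n + 1) := by
      apply one_div_le_one_div_of_le (by positivity)
      have : (n : ℝ) ≤ max m n := by exact_mod_cast le_max_right m n
      linarith
    exact ⟨max m n, preimage_mono (closedBall_subset_closedBall (by exact_mod_cast h1)),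
      preimage_mono (closedBall_subset_closedBall (by exact_mod_cast h2))⟩
  have hball : (⋂ n : ℕ, closedBall y (1 / (n + 1))) = {y} := by
    apply Subset.antisymm
    · intro z hz
      simp only [mem_iInter, mem_closedBall] at hz
      have hle : dist z y ≤ 0 := by
        refine le_of_forall_pos_le_add fun ε hε => ?_
        obtain ⟨n, hn⟩ := exists_nat_one_div_lt hε
        have := hz n
        have hc : (1 : ℝ) / (n + 1) < ε := hn
        linarith
      exact mem_singleton_iff.mpr (dist_eq_zero.mp (le_antisymm hle dist_nonneg))
    · rintro z (rfl : z = y)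
      simp only [mem_iInter, mem_closedBall, dist_self]
      intro n; positivity
  have hiInter : (⋂ n : ℕ, f ⁻¹' (closedBall y (1 / (n + 1)))) = f ⁻¹' {y} := by
    rw [← preimage_iInter, hball]
  obtain ⟨n, hn⟩ := exists_subset_nhds_of_compactSpace
    (V := fun n : ℕ => f ⁻¹' (closedBall y (1 / (n + 1)))) hdir
    (fun n => IsClosed.preimage hfc isClosed_closedBall)
    (fun x hx => hU.mem_nhds (hfib (hiInter ▸ hx)))
  exact ⟨1 / (n + 1), by positivity, hn⟩

/-- (D): a small radius making the closed balls around a finite set pairwise disjoint. -/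
lemma aux_disjoint_radius [MetricSpace X] {F : Set X} (hF : F.Finite) {ε : ℝ} (hε : 0 < ε) :
    ∃ ρ > 0, ρ ≤ ε ∧ ∀ a ∈ F, ∀ b ∈ F, a ≠ b →
      Disjoint (closedBall a ρ) (closedBall b ρ) := by
  classical
  set s : Finset (X × X) := (hF.toFinset ×ˢ hF.toFinset).filter (fun p => p.1 ≠ p.2) with hs
  by_cases h : s.Nonempty
  · set m := s.inf' h (fun p => dist p.1 p.2) with hm
    have hmpos : 0 < m := by
      rw [hm, Finset.lt_inf'_iff]
      intro p hp
      simp only [hs, Finset.mem_filter] at hp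
      exact dist_pos.mpr hp.2
    refine ⟨min ε (m / 3), by positivity, min_le_left _ _, ?_⟩
    intro a ha b hb hab
    have hmem : (a, b) ∈ s := by
      simp only [hs, Finset.mem_filter, Finset.mem_product, hF.mem_toFinset]
      exact ⟨⟨ha, hb⟩, hab⟩
    have hdist : m ≤ dist a b := Finset.inf'_le (fun p => dist p.1 p.2) hmem
    apply closedBall_disjoint_closedBall
    have : min ε (m / 3) ≤ m / 3 := min_le_right _ _
    linarith
  · refine ⟨ε, hε, le_refl _, fun a ha b hb hab => absurd ⟨(a, b), ?_⟩ h⟩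
    simp only [hs, Finset.mem_filter, Finset.mem_product, hF.mem_toFinset]
    exact ⟨⟨ha, hb⟩, hab⟩

/-- components of closed sets are closed -/
lemma aux_isClosed_connectedComponentIn [TopologicalSpace X] {K : Set X} (hK : IsClosed K)
    {y : X} : IsClosed (connectedComponentIn K y) := by
  by_cases hy : y ∈ K
  · have h1 : closure (connectedComponentIn K y) ⊆ connectedComponentIn K y := by
      apply IsPreconnected.subset_connectedComponentIn
      · exact isPreconnected_connectedComponentIn.closure
      · exact subset_closure (mem_connectedComponentIn hy)
      · exact (closure_mono (connectedComponentIn_subset K y)).trans hK.closure_subset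
    exact isClosed_of_closure_subset h1
  · rw [connectedComponentIn_eq_empty hy]; exact isClosed_empty


/-- a preconnected set inside the union of disjoint balls around a finite set lies in one ball -/
lemma aux_in_one_ball [MetricSpace X] {F : Set X} (hF : F.Finite) {ρ : ℝ}
    (hdisj : ∀ a ∈ F, ∀ b ∈ F, a ≠ b → Disjoint (closedBall a ρ) (closedBall b ρ))
    {Q : Set X} (hQ : IsPreconnected Q) (hQsub : Q ⊆ ⋃ a ∈ F, ball a ρ)
    {q : X} (hq : q ∈ Q) : ∃ a ∈ F, Q ⊆ ball a ρ := by
  obtain ⟨a₀, ha₀F, hqa₀⟩ : ∃ a ∈ F, q ∈ ball a ρ := by simpa using hQsub hq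
  refine ⟨a₀, ha₀F, ?_⟩
  set v : Set X := ⋃ a ∈ F \ {a₀}, ball a ρ with hv
  have hvopen : IsOpen v := isOpen_biUnion fun a _ => isOpen_ball
  have hdisj' : Disjoint (ball a₀ ρ) v := by
    rw [hv, disjoint_iUnion₂_right]
    intro a ha
    exact (hdisj a₀ ha₀F a ha.1 (fun h => ha.2 h.symm)).mono
      ball_subset_closedBall ball_subset_closedBall
  have hcover : Q ⊆ ball a₀ ρ ∪ v := by
    intro z hz
    obtain ⟨a, haF, hza⟩ : ∃ a ∈ F, z ∈ ball a ρ := by simpa using hQsub hz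
    by_cases hne : a = a₀
    · exact Or.inl (hne ▸ hza)
    · exact Or.inr (mem_biUnion ⟨haF, hne⟩ hza)
  exact hQ.subset_left_of_subset_union isOpen_ball hvopen hdisj' hcover ⟨q, hq, hqa₀⟩

/-- uniform co-smallness: connected sets with small image are small. -/
lemma aux_uniform_small [MetricSpace X] [CompactSpace X] [MetricSpace Y] [CompactSpace Y]
    [Nonempty Y] {f : X → Y} (hfc : Continuous f) (hfib : ∀ y : Y, (f ⁻¹' {y}).Finite)
    {ε : ℝ} (hε : 0 < ε) :
    ∃ δ > 0, ∀ Q : Set X, IsPreconnected Q → Q.Nonempty → diam (f '' Q) ≤ δ → diam Q < ε := by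
  have hε3 : 0 < ε / 3 := by linarith
  -- for each y, choose ρ y and r y
  have hchoice : ∀ y : Y, ∃ p : ℝ × ℝ, (0 < p.1 ∧ p.1 ≤ ε / 3 ∧
      (∀ a ∈ f ⁻¹' {y}, ∀ b ∈ f ⁻¹' {y}, a ≠ b →
        Disjoint (closedBall a p.1) (closedBall b p.1))) ∧
      (0 < p.2 ∧ f ⁻¹' (closedBall y p.2) ⊆ ⋃ a ∈ f ⁻¹' {y}, ball a p.1) := by
    intro y
    obtain ⟨ρ, hρ0, hρε, hρdisj⟩ := aux_disjoint_radius (hfib y) hε3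
    obtain ⟨r, hr0, hr⟩ := aux_preimage_small_ball hfc y
      (isOpen_biUnion fun a _ => isOpen_ball)
      (fun a ha => mem_biUnion ha (mem_ball_self hρ0))
    exact ⟨(ρ, r), ⟨hρ0, hρε, hρdisj⟩, hr0, hr⟩
  choose p hp1 hp2 using hchoice
  set ρ : Y → ℝ := fun y => (p y).1
  set r : Y → ℝ := fun y => (p y).2
  -- finite subcover
  obtain ⟨t, ht⟩ := isCompact_univ.elim_finite_subcover (fun y : Y => ball y (r y / 2))
    (fun y => isOpen_ball) (fun z _ => mem_iUnion.mpr ⟨z, mem_ball_self (by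
      have := (hp2 z).1; simp only [r]; linarith)⟩)
  have htne : t.Nonempty := by
    by_contra hemp
    rw [Finset.not_nonempty_iff_eq_empty] at hemp
    obtain ⟨y⟩ := ‹Nonempty Y›
    have := ht (mem_univ y)
    simp [hemp] at this
  set δ := t.inf' htne (fun y => r y / 2) with hδ
  have hδ0 : 0 < δ := by
    rw [hδ, Finset.lt_inf'_iff]
    intro y _
    have := (hp2 y).1
    simp only [r]; linarith
  refine ⟨δ, hδ0, fun Q hQconn hQne hQsmall => ?_⟩
  obtain ⟨q, hq⟩ := hQne
  obtain ⟨y₀, hy₀t, hfq⟩ : ∃ y₀ ∈ t, f q ∈ ball y₀ (r y₀ / 2) := by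
    simpa using ht (mem_univ (f q))
  have hQr : Q ⊆ f ⁻¹' (closedBall y₀ (r y₀)) := by
    intro z hz
    have h1 : dist (f z) (f q) ≤ δ :=
      le_trans (dist_le_diam_of_mem isBounded_of_compactSpace (mem_image_of_mem f hz) (mem_image_of_mem f hq)) hQsmall
    have h2 : δ ≤ r y₀ / 2 := Finset.inf'_le _ hy₀t
    have h3 : dist (f q) y₀ < r y₀ / 2 := hfq
    simp only [mem_preimage, mem_closedBall]
    calc dist (f z) y₀ ≤ dist (f z) (f q) + dist (f q) y₀ := dist_triangle _ _ _
    _ ≤ r y₀ := by linarith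
  have hQsub : Q ⊆ ⋃ a ∈ f ⁻¹' {y₀}, ball a (ρ y₀) := hQr.trans (hp2 y₀).2
  obtain ⟨a, _, hQball⟩ := aux_in_one_ball (hfib y₀) (hp1 y₀).2.2 hQconn hQsub hq
  calc diam Q ≤ diam (ball a (ρ y₀)) := diam_mono hQball isBounded_ball
  _ ≤ 2 * ρ y₀ := diam_ball (le_of_lt (hp1 y₀).1)
  _ ≤ 2 * (ε / 3) := by have := (hp1 y₀).2.1; linarith
  _ < ε := by linarith


/-- Part 2: components of the preimage are locally connected. -/
lemma aux_locally_connected {S₁ S₂ : Type*} [MetricSpace S₁] [CompactSpace S₁]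
    [MetricSpace S₂] [CompactSpace S₂]
    {f : S₁ → S₂} (hfc : Continuous f) (hfo : IsOpenMap f)
    (hfib : ∀ y : S₂, (f ⁻¹' {y}).Finite)
    {K : Set S₂} (hK : IsCompact K)
    (hlc : ∀ y ∈ K, LocallyConnectedSpace (connectedComponentIn K y))
    {x₀ : S₁} (hx₀ : x₀ ∈ f ⁻¹' K) :
    LocallyConnectedSpace (connectedComponentIn (f ⁻¹' K) x₀) := by
  set L := f ⁻¹' K with hLdef
  set Q := connectedComponentIn L x₀ with hQdef
  rw [locallyConnectedSpace_iff_connected_subsets]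
  rintro ⟨x, hxQ⟩ U hU
  obtain ⟨ε, hε0, hball⟩ := Metric.mem_nhds_iff.mp hU
  have hxL : x ∈ L := connectedComponentIn_subset L x₀ hxQ
  set y := f x with hydef
  have hyK : y ∈ K := hxL
  set C := connectedComponentIn K y with hCdef
  have hCclosed : IsClosed C := aux_isClosed_connectedComponentIn hK.isClosed
  have hCy : y ∈ C := mem_connectedComponentIn hyK
  have hxF : x ∈ f ⁻¹' {y} := rfl
  have hε3 : (0 : ℝ) < ε / 3 := by linarith
  obtain ⟨ρ, hρ0, hρε, hρdisj⟩ := aux_disjoint_radius (hfib y) hε3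
  obtain ⟨r, hr0, hr⟩ := aux_preimage_small_ball hfc y
    (isOpen_biUnion fun (a : S₁) _ => isOpen_ball)
    (fun a ha => mem_biUnion ha (mem_ball_self hρ0))
  -- find a connected neighborhood W of y in C within ball y r
  haveI : LocallyConnectedSpace C := hlc y hyK
  have hbr : (Subtype.val ⁻¹' (ball y r) : Set C) ∈ 𝓝 (⟨y, hCy⟩ : C) :=
    (isOpen_ball.preimage continuous_subtype_val).mem_nhds (mem_ball_self hr0)
  obtain ⟨V, hVnhds, hVconn, hVsub⟩ :=
    locallyConnectedSpace_iff_connected_subsets.mp ‹LocallyConnectedSpace C› ⟨y, hCy⟩ _ hbr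
  set W : Set S₂ := Subtype.val '' V with hWdef
  have hWconn : IsPreconnected W := hVconn.image _ continuous_subtype_val.continuousOn
  have hWy : y ∈ W := ⟨⟨y, hCy⟩, mem_of_mem_nhds hVnhds, rfl⟩
  have hWC : W ⊆ C := by rintro _ ⟨v, _, rfl⟩; exact v.2
  have hWball : W ⊆ ball y r := by rintro _ ⟨v, hv, rfl⟩; exact hVsub hv
  obtain ⟨O, hOopen, hyO, hOC⟩ : ∃ O : Set S₂, IsOpen O ∧ y ∈ O ∧ O ∩ C ⊆ W := by
    obtain ⟨T, hTsub, hTopen, hyT⟩ := _root_.mem_nhds_iff.mp hVnhds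
    obtain ⟨O, hOopen, hOpre⟩ := isOpen_induced_iff.mp hTopen
    refine ⟨O, hOopen, ?_, ?_⟩
    · have : (⟨y, hCy⟩ : C) ∈ T := hyT
      rw [← hOpre] at this
      exact this
    · intro w hw
      have hwmem : (⟨w, hw.2⟩ : C) ∈ T := by rw [← hOpre]; exact hw.1
      exact ⟨⟨w, hw.2⟩, hTsub hwmem, rfl⟩
  set D := closure W with hDdef
  have hDconn : IsPreconnected D := hWconn.closure
  have hDC : D ⊆ C := hCclosed.closure_subset_iff.mpr hWC
  have hDball : D ⊆ closedBall y r :=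
    closure_minimal (hWball.trans ball_subset_closedBall) isClosed_closedBall
  have hDK : D ⊆ K := hDC.trans (connectedComponentIn_subset K y)
  have hyD : y ∈ D := subset_closure hWy
  set N := f ⁻¹' D ∩ ball x ρ with hNdef
  have hxN : x ∈ N := ⟨mem_preimage.mpr hyD, mem_ball_self hρ0⟩
  have hNeq : N = f ⁻¹' D ∩ closedBall x ρ := by
    apply Subset.antisymm (inter_subset_inter_right _ ball_subset_closedBall)
    rintro z ⟨hzD, hzB⟩
    refine ⟨hzD, ?_⟩
    have hzr : z ∈ f ⁻¹' (closedBall y r) := mem_preimage.mpr (hDball hzD)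
    obtain ⟨a, haF, hza⟩ : ∃ a ∈ f ⁻¹' {y}, z ∈ ball a ρ := by simpa using hr hzr
    by_cases hax : a = x
    · exact hax ▸ hza
    · exact absurd rfl
        ((hρdisj a haF x hxF hax).ne_of_mem (ball_subset_closedBall hza) hzB)
  have hNclosed : IsClosed N := by
    rw [hNeq]; exact (isClosed_closure.preimage hfc).inter isClosed_closedBall
  have hNcpt : IsCompact N := hNclosed.isCompact
  have hNimg : f '' N ⊆ D := (image_mono (f := f) inter_subset_left).trans (image_preimage_subset f D)
  have hswap : ∀ V : Set S₁, V ∩ N = (V ∩ ball x ρ) ∩ f ⁻¹' D := by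
    intro V
    rw [hNdef]; ext w
    simp only [mem_inter_iff, mem_preimage]
    tauto
  have hopen' : ∀ V : Set S₁, IsOpen V → ∃ O' : Set S₂, IsOpen O' ∧ f '' (V ∩ N) = O' ∩ D := by
    intro V hV
    refine ⟨f '' (V ∩ ball x ρ), hfo _ (hV.inter isOpen_ball), ?_⟩
    rw [hswap V]
    exact Set.image_inter_preimage f _ D
  have hcompx : ∀ z ∈ N, z ∈ connectedComponentIn N x := by
    intro z hz
    obtain ⟨w, hwcomp, hwf⟩ := aux_meets_fiber hfc hNcpt hopen' hNimg hDconn hz hyD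
    have hwN : w ∈ N := connectedComponentIn_subset N z hwcomp
    have hwx : w = x := by
      by_contra hne
      exact absurd rfl ((hρdisj w (by simp [hwf]) x hxF hne).ne_of_mem
        (mem_closedBall_self (le_of_lt hρ0)) (ball_subset_closedBall hwN.2))
    rw [hwx] at hwcomp
    exact (connectedComponentIn_eq hwcomp) ▸ mem_connectedComponentIn hz
  have hNconn : IsPreconnected N := by
    have h1 : N = connectedComponentIn N x :=
      Subset.antisymm (fun z hz => hcompx z hz) (connectedComponentIn_subset N x)
    rw [h1]; exact isPreconnected_connectedComponentIn
  have hNL : N ⊆ L := fun z hz => preimage_mono hDK hz.1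
  have hQx : Q = connectedComponentIn L x := connectedComponentIn_eq hxQ
  have hNQ : N ⊆ Q := by rw [hQx]; exact hNconn.subset_connectedComponentIn hxN hNL
  have hfQ : f '' Q ⊆ C := by
    apply IsPreconnected.subset_connectedComponentIn
    · exact isPreconnected_connectedComponentIn.image f hfc.continuousOn
    · exact ⟨x, hxQ, rfl⟩
    · exact (image_mono (f := f) (connectedComponentIn_subset L x₀)).trans (image_preimage_subset f K)
  refine ⟨Subtype.val ⁻¹' N, ?_, ?_, ?_⟩
  · rw [_root_.mem_nhds_iff]
    refine ⟨Subtype.val ⁻¹' (f ⁻¹' O ∩ ball x ρ), ?_, ?_, ?_⟩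
    · intro z hz
      have hfzC : f ↑z ∈ C := hfQ (mem_image_of_mem f z.2)
      have hfzW : f ↑z ∈ W := hOC ⟨hz.1, hfzC⟩
      exact ⟨subset_closure hfzW, hz.2⟩
    · exact ((hOopen.preimage hfc).inter isOpen_ball).preimage continuous_subtype_val
    · exact ⟨hyO, mem_ball_self hρ0⟩
  · apply IsInducing.subtypeVal.isPreconnected_image.mp
    have himg2 : Subtype.val '' (Subtype.val ⁻¹' N : Set Q) = N := by
      rw [Subtype.image_preimage_coe]
      exact inter_eq_right.mpr hNQ
    rw [himg2]
    exact hNconn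
  · intro z hz
    apply hball
    rw [mem_ball, Subtype.dist_eq]
    have h1 : dist (↑z : S₁) x < ρ := mem_ball.mp hz.2
    linarith


end AuxPeano

/-- Let `f : S₁ → S₂` be a branched covering between closed surfaces and
`K ⊆ S₂` nonempty compact. If `K` is a Peano compactum (with the restricted metric), then
so is `L = f⁻¹(K)`. -/
theorem isPeanoCompactumSet_preimage_of_branchedCovering
    {S₁ S₂ : Type*}
    [MetricSpace S₁] [CompactSpace S₁] [ConnectedSpace S₁] [Nonempty S₁]
    [MetricSpace S₂] [CompactSpace S₂] [ConnectedSpace S₂] [Nonempty S₂]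
    (hS₁ : IsSurfaceLocallyEuclidean S₁) (hS₂ : IsSurfaceLocallyEuclidean S₂)
    (f : S₁ → S₂) (hf : IsBranchedCovering f)
    (K : Set S₂) (hK : IsCompact K) (hKne : K.Nonempty)
    (hKP : IsPeanoCompactumSet K) :
    IsPeanoCompactumSet (f ⁻¹' K) := by
  obtain ⟨hfc, hfo, hfs, hfib⟩ := hf
  have hLclosed : IsClosed (f ⁻¹' K) := hK.isClosed.preimage hfc
  have hLcpt : IsCompact (f ⁻¹' K) := hLclosed.isCompact
  refine ⟨hLcpt, ?_, ?_⟩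
  · intro x hx
    exact aux_locally_connected hfc hfo hfib hK hKP.2.1 hx
  · intro ε hε
    obtain ⟨δ, hδ0, hδ⟩ := aux_uniform_small hfc hfib hε
    have hF := hKP.2.2 δ hδ0
    have hsel : ∀ C : Set S₂, ∃ y : S₂, C.Nonempty → y ∈ C := by
      intro C
      by_cases h : C.Nonempty
      · exact ⟨h.some, fun _ => h.some_mem⟩
      · exact ⟨Classical.arbitrary S₂, fun hc => absurd hc h⟩
    choose sel hselmem using hsel
    set T : Set S₁ := ⋃ C ∈ {C : Set S₂ | (∃ x ∈ K, C = connectedComponentIn K x) ∧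
      δ < Metric.diam C}, f ⁻¹' {sel C} with hTdef
    have hTfin : T.Finite := hF.biUnion (fun C _ => hfib (sel C))
    have hmain : {C : Set S₁ | (∃ x ∈ f ⁻¹' K, C = connectedComponentIn (f ⁻¹' K) x) ∧
        ε < Metric.diam C} ⊆ (fun z => connectedComponentIn (f ⁻¹' K) z) '' T := by
      rintro Q ⟨⟨x, hxL, rfl⟩, hQbig⟩
      have hfxK : f x ∈ K := hxL
      have hxQ : x ∈ connectedComponentIn (f ⁻¹' K) x := mem_connectedComponentIn hxL
      have himgQ : f '' connectedComponentIn (f ⁻¹' K) x ⊆ connectedComponentIn K (f x) := by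
        apply IsPreconnected.subset_connectedComponentIn
        · exact isPreconnected_connectedComponentIn.image f hfc.continuousOn
        · exact ⟨x, hxQ, rfl⟩
        · exact (image_mono (f := f) (connectedComponentIn_subset _ x)).trans
            (image_preimage_subset f K)
      have hdiamimg : δ < Metric.diam (f '' connectedComponentIn (f ⁻¹' K) x) := by
        by_contra h
        push_neg at h
        exact absurd (hδ _ isPreconnected_connectedComponentIn ⟨x, hxQ⟩ h)
          (not_lt.mpr (le_of_lt hQbig))
      have hCF : connectedComponentIn K (f x) ∈ {C : Set S₂ |
          (∃ x ∈ K, C = connectedComponentIn K x) ∧ δ < Metric.diam C} :=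
        ⟨⟨f x, hfxK, rfl⟩, lt_of_lt_of_le hdiamimg (diam_mono himgQ isBounded_of_compactSpace)⟩
      have hCne : (connectedComponentIn K (f x)).Nonempty := ⟨f x, mem_connectedComponentIn hfxK⟩
      have hselC : sel (connectedComponentIn K (f x)) ∈ connectedComponentIn K (f x) :=
        hselmem _ hCne
      have hMcpt : IsCompact (f ⁻¹' connectedComponentIn K (f x)) :=
        ((aux_isClosed_connectedComponentIn hK.isClosed).preimage hfc).isCompact
      obtain ⟨z, hzcomp, hzf⟩ := aux_meets_fiber hfc hMcpt
        (fun V hV => ⟨f '' V, hfo V hV, Set.image_inter_preimage f V _⟩)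
        (image_preimage_subset f _) isPreconnected_connectedComponentIn
        (mem_preimage.mpr (mem_connectedComponentIn hfxK)) hselC
      have hzQ : z ∈ connectedComponentIn (f ⁻¹' K) x :=
        connectedComponentIn_mono x (preimage_mono (connectedComponentIn_subset K (f x))) hzcomp
      refine ⟨z, ?_, ?_⟩
      · exact mem_biUnion hCF (by simp [hzf])
      · exact (connectedComponentIn_eq hzQ).symm
    exact (hTfin.image _).subset hmain
end

section
/- Let K be a nonempty compact subset of a closed surface S with a fixed metric inducing its topology. Then the Schönflies relation is contained in the relation R̃_K, i.e., R_K ⊆ R̃_K as subsets of K × K. -/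
open Set Metric Filter Topology unitInterval

/-- The Schönflies relation of a compact set `K` on a (metric) surface `S`: pairs `(x, x)`
with `x ∈ K`, together with pairs of distinct points `x, y ∈ K` for which there is a
topological embedding `φ` of the square `[0,1]²` into `S` (a marked quadrilateral with
marked sides `I₁ = φ([0,1]×{0})` and `I₂ = φ([0,1]×{1})`) such that
(a) `x ∈ I₁`, `y ∈ I₂` and `K ∩ ∂Q ⊆ I₁ ∪ I₂`;
(b) `K ∩ Q` has infinitely many pairwise distinct connected components `Qₙ`, each meeting
both `I₁` and `I₂`;
(c) the sequence `(Qₙ)` converges in the Hausdorff metric to a continuum `Q∞` containing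
both `x` and `y`. -/
def schonfliesRel {S : Type*} [MetricSpace S] (K : Set S) : Set (S × S) :=
  {p | p.1 ∈ K ∧ p.2 ∈ K ∧ (p.1 = p.2 ∨
    ∃ φ : unitInterval × unitInterval → S, Topology.IsEmbedding φ ∧
      p.1 ∈ φ '' {q | q.2 = 0} ∧ p.2 ∈ φ '' {q | q.2 = 1} ∧
      K ∩ (φ '' {q | q.1 = 0 ∨ q.1 = 1 ∨ q.2 = 0 ∨ q.2 = 1}) ⊆
        (φ '' {q | q.2 = 0}) ∪ (φ '' {q | q.2 = 1}) ∧
      ∃ Q : ℕ → Set S,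
        (∀ m n, m ≠ n → Q m ≠ Q n) ∧
        (∀ n, ∃ z ∈ K ∩ Set.range φ, Q n = connectedComponentIn (K ∩ Set.range φ) z) ∧
        (∀ n, (Q n ∩ φ '' {q | q.2 = 0}).Nonempty ∧ (Q n ∩ φ '' {q | q.2 = 1}).Nonempty) ∧
        ∃ Qinf : Set S, IsCompact Qinf ∧ IsConnected Qinf ∧
          Filter.Tendsto (fun n => Metric.hausdorffDist (Q n) Qinf) Filter.atTop (nhds 0) ∧
          p.1 ∈ Qinf ∧ p.2 ∈ Qinf)}

/-- The collection of closed equivalence relations on `K` containing a given relation `R`. -/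
def closedEquivsOn {S : Type*} [MetricSpace S] (K : Set S) (R : Set (S × S)) :
    Set (Set (S × S)) :=
  {E | R ⊆ E ∧ E ⊆ K ×ˢ K ∧ IsClosed E ∧ (∀ x ∈ K, (x, x) ∈ E) ∧
    (∀ x y, (x, y) ∈ E → (y, x) ∈ E) ∧
    (∀ x y z, (x, y) ∈ E → (y, z) ∈ E → (x, z) ∈ E)}

/-- The Schönflies equivalence `∼_K`: the smallest closed equivalence relation on `K`
containing the Schönflies relation `R_K`. -/
def schonfliesEquiv {S : Type*} [MetricSpace S] (K : Set S) : Set (S × S) :=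
  ⋂₀ closedEquivsOn K (schonfliesRel K)

/-- The Schönflies class `[x]_∼` of a point `x`. -/
def schonfliesClass {S : Type*} [MetricSpace S] (K : Set S) (x : S) : Set S :=
  {y | (x, y) ∈ schonfliesEquiv K}

/-- The decomposition `D_K = {[x]_∼ : x ∈ K}` of `K` into Schönflies classes. -/
def schonfliesDecomp {S : Type*} [MetricSpace S] (K : Set S) : Set (Set S) :=
  {C | ∃ x ∈ K, C = schonfliesClass K x}

/-- The relation `R̃` on a compactum `X`: pairs `(x, x)` together with pairs of distinct
points `x ≠ y` admitting decreasing sequences of open neighborhoods `(Uₙ)` of `x` and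
`(Vₙ)` of `y` with `⋂ₙ Uₙ = {x}`, `⋂ₙ Vₙ = {y}`, such that for every `n` the complement
`X \ (Uₙ ∪ Vₙ)` has infinitely many connected components meeting both `∂Uₙ` and `∂Vₙ`. -/
def rTilde (X : Type*) [TopologicalSpace X] : Set (X × X) :=
  {p | p.1 = p.2 ∨ (p.1 ≠ p.2 ∧ ∃ U V : ℕ → Set X,
    (∀ n, IsOpen (U n) ∧ p.1 ∈ U n) ∧ (∀ n, IsOpen (V n) ∧ p.2 ∈ V n) ∧
    (∀ n, U (n + 1) ⊆ U n) ∧ (∀ n, V (n + 1) ⊆ V n) ∧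
    (⋂ n, U n) = {p.1} ∧ (⋂ n, V n) = {p.2} ∧
    ∀ n, {C : Set X |
      (∃ z ∈ (U n ∪ V n)ᶜ, C = connectedComponentIn ((U n ∪ V n)ᶜ) z) ∧
      (C ∩ frontier (U n)).Nonempty ∧ (C ∩ frontier (V n)).Nonempty}.Infinite)}


section Aux

open Function

/-- In a compact Hausdorff space, if the connected component of a point is disjoint from a
closed set `B`, then some clopen set containing the point is disjoint from `B`. -/
lemma exists_isClopen_disjoint_of_connectedComponent
    {Y : Type*} [TopologicalSpace Y] [T2Space Y] [CompactSpace Y] {w : Y} {B : Set Y}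
    (hB : IsClosed B) (h : connectedComponent w ∩ B = ∅) :
    ∃ Z : Set Y, IsClopen Z ∧ w ∈ Z ∧ Z ∩ B = ∅ := by
  have hBc : IsCompact B := hB.isCompact
  have hcover : B ⊆ ⋃ Z : { Z : Set Y // IsClopen Z ∧ w ∈ Z }, (Z : Set Y)ᶜ := by
    intro b hb
    by_contra hbn
    simp only [Set.mem_iUnion, Set.mem_compl_iff, not_exists, not_not] at hbn
    have hbcc : b ∈ connectedComponent w := by
      rw [connectedComponent_eq_iInter_isClopen]
      exact Set.mem_iInter.2 fun Z => hbn Z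
    have : b ∈ connectedComponent w ∩ B := ⟨hbcc, hb⟩
    rw [h] at this
    exact this
  obtain ⟨t, ht⟩ := hBc.elim_finite_subcover (fun Z : { Z : Set Y // IsClopen Z ∧ w ∈ Z } =>
    (Z : Set Y)ᶜ) (fun Z => Z.2.1.isClosed.isOpen_compl) hcover
  refine ⟨⋂ Z ∈ t, (Z : Set Y), isClopen_biInter_finset (fun Z _ => Z.2.1), ?_, ?_⟩
  · exact Set.mem_biInter fun Z _ => Z.2.2
  · rw [Set.eq_empty_iff_forall_notMem]
    rintro b ⟨hb1, hb2⟩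
    obtain ⟨Z, hZt, hZ⟩ := Set.mem_iUnion₂.1 (ht hb2)
    exact hZ (Set.mem_iInter₂.1 hb1 Z hZt)

/-- Cut-wire theorem: if a continuum `Q` meets two sets `u`, `v` with disjoint closures,
then some connected component of `Q \ (u ∪ v)` meets both `closure u` and `closure v`. -/
lemma cutwire {X : Type*} [MetricSpace X] {Q u v : Set X}
    (hQc : IsCompact Q) (hQ : IsPreconnected Q) (hu : IsOpen u) (hv : IsOpen v)
    (huv : closure u ∩ closure v = ∅)
    (hQu : (Q ∩ u).Nonempty) (hQv : (Q ∩ v).Nonempty) :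
    ∃ z ∈ Q \ (u ∪ v),
      (connectedComponentIn (Q \ (u ∪ v)) z ∩ closure u).Nonempty ∧
      (connectedComponentIn (Q \ (u ∪ v)) z ∩ closure v).Nonempty := by
  by_contra hcon
  push_neg at hcon
  set W : Set X := Q \ (u ∪ v) with hWdef
  have hWc : IsCompact W := by
    have : W = Q ∩ (u ∪ v)ᶜ := by ext z; simp [hWdef, Set.mem_diff]
    rw [this]
    exact hQc.inter_right (hu.union hv).isClosed_compl
  haveI : CompactSpace ↥W := isCompact_iff_compactSpace.mp hWc
  -- components of points of `W ∩ closure u` miss `W ∩ closure v`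
  have hmiss : ∀ z ∈ W, z ∈ closure u → connectedComponentIn W z ∩ closure v = ∅ := by
    intro z hz hzu
    have hP : (connectedComponentIn W z ∩ closure u).Nonempty :=
      ⟨z, mem_connectedComponentIn hz, hzu⟩
    exact hcon z hz hP
  -- transfer to the subtype
  set A' : Set ↥W := Subtype.val ⁻¹' closure u with hA'def
  set B' : Set ↥W := Subtype.val ⁻¹' closure v with hB'def
  have hA'closed : IsClosed A' := isClosed_closure.preimage continuous_subtype_val
  have hB'closed : IsClosed B' := isClosed_closure.preimage continuous_subtype_val
  have hclopen : ∀ a : ↥A', ∃ Z : Set ↥W, IsClopen Z ∧ (a : ↥W) ∈ Z ∧ Z ∩ B' = ∅ := by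
    intro a
    apply exists_isClopen_disjoint_of_connectedComponent hB'closed
    have hmem : ((a : ↥W) : X) ∈ W := (a : ↥W).2
    have hcc : connectedComponentIn W ((a : ↥W) : X) ∩ closure v = ∅ :=
      hmiss _ hmem a.2
    rw [Set.eq_empty_iff_forall_notMem]
    rintro b ⟨hb1, hb2⟩
    have hb1' : (b : X) ∈ connectedComponentIn W ((a : ↥W) : X) := by
      rw [connectedComponentIn_eq_image hmem]
      exact ⟨b, by simpa using hb1, rfl⟩
    have : (b : X) ∈ connectedComponentIn W ((a : ↥W) : X) ∩ closure v := ⟨hb1', hb2⟩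
    rw [hcc] at this
    exact this
  choose Z hZclopen hZmem hZdisj using hclopen
  have hA'c : IsCompact A' := hA'closed.isCompact
  have hcover : A' ⊆ ⋃ a : ↥A', Z a := fun w hw => Set.mem_iUnion.2 ⟨⟨w, hw⟩, hZmem ⟨w, hw⟩⟩
  obtain ⟨t, ht⟩ := hA'c.elim_finite_subcover Z (fun a => (hZclopen a).isOpen) hcover
  set V₁' : Set ↥W := ⋃ a ∈ t, Z a with hV₁'def
  have hV₁'closed : IsClosed V₁' := t.finite_toSet.isClosed_biUnion fun a _ => (hZclopen a).isClosed
  have hA'sub : A' ⊆ V₁' := ht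
  have hV₁'B' : V₁' ∩ B' = ∅ := by
    rw [Set.eq_empty_iff_forall_notMem]
    rintro b ⟨hb1, hb2⟩
    obtain ⟨a, hat, ha⟩ := Set.mem_iUnion₂.1 hb1
    have : b ∈ Z a ∩ B' := ⟨ha, hb2⟩
    rw [hZdisj a] at this
    exact this
  set V₁ : Set X := Subtype.val '' V₁' with hV₁def
  set V₂ : Set X := Subtype.val '' V₁'ᶜ with hV₂def
  have hV₁closed : IsClosed V₁ :=
    (hV₁'closed.isCompact.image continuous_subtype_val).isClosed
  have hV₁'open : IsOpen V₁' := isOpen_biUnion fun a _ => (hZclopen a).isOpen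
  have hV₂closed : IsClosed V₂ :=
    ((hV₁'open.isClosed_compl.isCompact).image continuous_subtype_val).isClosed
  have hV₁subW : V₁ ⊆ W := by rintro _ ⟨a, _, rfl⟩; exact a.2
  have hV₂subW : V₂ ⊆ W := by rintro _ ⟨a, _, rfl⟩; exact a.2
  have hWsplit : ∀ z ∈ W, z ∈ V₁ ∨ z ∈ V₂ := by
    intro z hz
    by_cases h : (⟨z, hz⟩ : ↥W) ∈ V₁'
    · exact Or.inl ⟨⟨z, hz⟩, h, rfl⟩
    · exact Or.inr ⟨⟨z, hz⟩, h, rfl⟩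
  have hV₁V₂ : V₁ ∩ V₂ = ∅ := by
    rw [Set.eq_empty_iff_forall_notMem]
    rintro z ⟨⟨a, ha, rfl⟩, ⟨b, hb, hba⟩⟩
    have : b = a := Subtype.ext hba
    rw [this] at hb
    exact hb ha
  have hAsubV₁ : ∀ z ∈ W, z ∈ closure u → z ∈ V₁ := by
    intro z hz hzu
    exact ⟨⟨z, hz⟩, hA'sub hzu, rfl⟩
  have hV₁v : V₁ ∩ closure v = ∅ := by
    rw [Set.eq_empty_iff_forall_notMem]
    rintro z ⟨⟨a, ha, rfl⟩, hzv⟩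
    have : a ∈ V₁' ∩ B' := ⟨ha, hzv⟩
    rw [hV₁'B'] at this
    exact this
  -- now derive a disconnection of Q
  have hWu : W ∩ u = ∅ := by
    rw [Set.eq_empty_iff_forall_notMem]; rintro z ⟨hz, hzu⟩; exact hz.2 (Or.inl hzu)
  have hWv : W ∩ v = ∅ := by
    rw [Set.eq_empty_iff_forall_notMem]; rintro z ⟨hz, hzv⟩; exact hz.2 (Or.inr hzv)
  have key := isPreconnected_closed_iff.1 hQ (closure (Q ∩ u) ∪ V₁) (closure (Q ∩ v) ∪ V₂)
    (isClosed_closure.union hV₁closed) (isClosed_closure.union hV₂closed)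
  have hsub : Q ⊆ (closure (Q ∩ u) ∪ V₁) ∪ (closure (Q ∩ v) ∪ V₂) := by
    intro z hz
    by_cases hzu : z ∈ u
    · exact Or.inl (Or.inl (subset_closure ⟨hz, hzu⟩))
    by_cases hzv : z ∈ v
    · exact Or.inr (Or.inl (subset_closure ⟨hz, hzv⟩))
    have hzW : z ∈ W := ⟨hz, by rintro (h | h) <;> [exact hzu h; exact hzv h]⟩
    rcases hWsplit z hzW with h | h
    · exact Or.inl (Or.inr h)
    · exact Or.inr (Or.inr h)
  obtain ⟨z, hzQ, hz1, hz2⟩ := key hsub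
    ⟨hQu.choose, hQu.choose_spec.1, Or.inl (subset_closure hQu.choose_spec)⟩
    ⟨hQv.choose, hQv.choose_spec.1, Or.inl (subset_closure hQv.choose_spec)⟩
  -- reduce closure membership to the pieces
  have hz1' : z ∈ (Q ∩ u) ∪ V₁ := by
    rcases hz1 with h | h
    · have hzu : z ∈ closure u := closure_mono Set.inter_subset_right h
      by_cases hzu' : z ∈ u
      · exact Or.inl ⟨hzQ, hzu'⟩
      · have hzv' : z ∉ v := by
          intro hzv
          have : z ∈ closure u ∩ closure v := ⟨hzu, subset_closure hzv⟩
          rw [huv] at this; exact this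
        exact Or.inr (hAsubV₁ z ⟨hzQ, by rintro (h' | h') <;> [exact hzu' h'; exact hzv' h']⟩ hzu)
    · exact Or.inr h
  have hz2' : z ∈ (Q ∩ v) ∪ V₂ := by
    rcases hz2 with h | h
    · have hzv : z ∈ closure v := closure_mono Set.inter_subset_right h
      by_cases hzv' : z ∈ v
      · exact Or.inl ⟨hzQ, hzv'⟩
      · have hzu' : z ∉ u := by
          intro hzu
          have : z ∈ closure u ∩ closure v := ⟨subset_closure hzu, hzv⟩
          rw [huv] at this; exact this
        have hzW : z ∈ W := ⟨hzQ, by rintro (h' | h') <;> [exact hzu' h'; exact hzv' h']⟩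
        rcases hWsplit z hzW with h2 | h2
        · exfalso
          have : z ∈ V₁ ∩ closure v := ⟨h2, hzv⟩
          rw [hV₁v] at this; exact this
        · exact Or.inr h2
    · exact Or.inr h
  rcases hz1' with ⟨_, hzu⟩ | hzV₁ <;> rcases hz2' with ⟨_, hzv⟩ | hzV₂
  · have : z ∈ closure u ∩ closure v := ⟨subset_closure hzu, subset_closure hzv⟩
    rw [huv] at this; exact this
  · have : z ∈ W ∩ u := ⟨hV₂subW hzV₂, hzu⟩
    rw [hWu] at this; exact this
  · have : z ∈ W ∩ v := ⟨hV₁subW hzV₁, hzv⟩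
    rw [hWv] at this; exact this
  · have : z ∈ V₁ ∩ V₂ := ⟨hzV₁, hzV₂⟩
    rw [hV₁V₂] at this; exact this

end Aux

/-- For a nonempty compact subset `K` of a closed surface `S`, the
Schönflies relation `R_K` is contained in `R̃_K` (as subsets of `K × K`, where `R̃_K`
is taken with respect to the subspace `K`). -/
theorem schonfliesRel_subset_rTilde
    {S : Type*} [MetricSpace S] [CompactSpace S] [ConnectedSpace S] [Nonempty S]
    (hS : IsSurfaceLocallyEuclidean S)
    (K : Set S) (hK : IsCompact K) (hKne : K.Nonempty) :
    ∀ (x y : S) (hx : x ∈ K) (hy : y ∈ K), (x, y) ∈ schonfliesRel K →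
      ((⟨x, hx⟩ : K), (⟨y, hy⟩ : K)) ∈ rTilde ↥K := by
  intro x y hx hy hR
  haveI : CompactSpace ↥K := isCompact_iff_compactSpace.mp hK
  simp only [rTilde, Set.mem_setOf_eq]
  by_cases hxy : x = y
  · exact Or.inl (Subtype.ext hxy)
  obtain ⟨hxK, hyK, hcase⟩ := hR
  rcases hcase with heq |
    ⟨φ, hφ, hxI, hyI, -, Q, hQdist, hQcomp, -, Qinf, hQinfc, -, htend, hxQ, hyQ⟩
  · exact absurd heq hxy
  have hne' : (⟨x, hx⟩ : K) ≠ ⟨y, hy⟩ := fun h => hxy (congrArg Subtype.val h)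
  refine Or.inr ⟨hne', ?_⟩
  set x' : ↥K := ⟨x, hx⟩ with hx'def
  set y' : ↥K := ⟨y, hy⟩ with hy'def
  set F : Set S := K ∩ Set.range φ with hFdef
  have hφcont : Continuous φ := hφ.continuous
  have hrange : IsCompact (Set.range φ) := isCompact_range hφcont
  have hFc : IsCompact F := hK.inter_right hrange.isClosed
  set C' : Set ↥K := Subtype.val ⁻¹' F with hC'def
  have hC'closed : IsClosed C' := hFc.isClosed.preimage continuous_subtype_val
  have hxF : x ∈ F := ⟨hx, by obtain ⟨q, -, hq⟩ := hxI; exact ⟨q, hq⟩⟩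
  have hx'C : x' ∈ C' := hxF
  have hC'ne : C'.Nonempty := ⟨x', hx'C⟩
  have hδ : (0:ℝ) < dist x' y' := dist_pos.mpr hne'
  set δ : ℝ := dist x' y' with hδdef
  set r : ℕ → ℝ := fun n => min (δ/3) (1/(n+1)) with hrdef
  have hr0 : ∀ n : ℕ, 0 < r n := fun n => lt_min (by linarith) (by positivity)
  have hrle : ∀ n : ℕ, r n ≤ 1/(n+1) := fun n => min_le_right _ _
  have hrd3 : ∀ n : ℕ, r n ≤ δ/3 := fun n => min_le_left _ _
  have hranti : ∀ n : ℕ, r (n+1) ≤ r n := by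
    intro n
    apply min_le_min le_rfl
    apply one_div_le_one_div_of_le (by positivity)
    push_cast; linarith
  set col : ℕ → Set ↥K := fun n => {z | z ∉ C' ∧ infDist z C' < 1/(n+1)} with hcoldef
  have hcolopen : ∀ n, IsOpen (col n) := fun n =>
    hC'closed.isOpen_compl.inter (isOpen_Iio.preimage (continuous_infDist_pt C'))
  have hcolanti : ∀ n, col (n+1) ⊆ col n := by
    intro n z hz
    refine ⟨hz.1, lt_of_lt_of_le hz.2 ?_⟩
    apply one_div_le_one_div_of_le (by positivity)
    push_cast; linarith
  set U : ℕ → Set ↥K := fun n => Metric.ball x' (r n) ∪ col n with hUdef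
  set V : ℕ → Set ↥K := fun n => Metric.ball y' (r n) ∪ col n with hVdef
  have hUopen : ∀ n, IsOpen (U n) := fun n => Metric.isOpen_ball.union (hcolopen n)
  have hVopen : ∀ n, IsOpen (V n) := fun n => Metric.isOpen_ball.union (hcolopen n)
  have hiInter : ∀ (a : ↥K), a ∈ C' → (⋂ n, (Metric.ball a (r n) ∪ col n)) ⊆ {a} := by
    intro a haC z hz
    rw [Set.mem_iInter] at hz
    have hz1 : ∀ n : ℕ, infDist z C' < 1/(n+1) := by
      intro n
      rcases hz n with h | h
      · calc infDist z C' ≤ dist z a := infDist_le_dist_of_mem haC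
          _ < r n := Metric.mem_ball.1 h
          _ ≤ 1/(n+1) := hrle n
      · exact h.2
    have hzC : z ∈ C' := by
      rw [hC'closed.mem_iff_infDist_zero hC'ne]
      by_contra h0
      have hpos : 0 < infDist z C' := lt_of_le_of_ne infDist_nonneg (Ne.symm h0)
      obtain ⟨n, hn⟩ := exists_nat_one_div_lt hpos
      exact absurd (hz1 n) (not_lt.2 hn.le)
    have hball : ∀ n : ℕ, dist z a < 1/(n+1) := by
      intro n
      rcases hz n with h | h
      · exact lt_of_lt_of_le (Metric.mem_ball.1 h) (hrle n)
      · exact absurd hzC h.1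
    have hza : dist z a = 0 := by
      by_contra h0
      have hpos : 0 < dist z a := lt_of_le_of_ne dist_nonneg (Ne.symm h0)
      obtain ⟨n, hn⟩ := exists_nat_one_div_lt hpos
      exact absurd (hball n) (not_lt.2 hn.le)
    exact dist_eq_zero.1 hza
  refine ⟨U, V, ?_, ?_, ?_, ?_, ?_, ?_, ?_⟩
  · exact fun n => ⟨hUopen n, Or.inl (Metric.mem_ball_self (hr0 n))⟩
  · exact fun n => ⟨hVopen n, Or.inl (Metric.mem_ball_self (hr0 n))⟩
  · exact fun n => Set.union_subset_union (Metric.ball_subset_ball (hranti n)) (hcolanti n)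
  · exact fun n => Set.union_subset_union (Metric.ball_subset_ball (hranti n)) (hcolanti n)
  · apply Set.eq_singleton_iff_unique_mem.mpr
    exact ⟨Set.mem_iInter.2 fun n => Or.inl (Metric.mem_ball_self (hr0 n)),
      fun z hz => hiInter x' hx'C hz⟩
  · have hy'C : y' ∈ C' := ⟨hy, by obtain ⟨q, -, hq⟩ := hyI; exact ⟨q, hq⟩⟩
    apply Set.eq_singleton_iff_unique_mem.mpr
    exact ⟨Set.mem_iInter.2 fun n => Or.inl (Metric.mem_ball_self (hr0 n)),
      fun z hz => hiInter y' hy'C hz⟩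
  · intro n
    set Wn : Set ↥K := (U n ∪ V n)ᶜ with hWndef
    have hWnclosed : IsClosed Wn := ((hUopen n).union (hVopen n)).isClosed_compl
    have hWndiff : IsClosed (Wn \ C') := by
      have heq : Wn \ C' = Wn ∩ {z : ↥K | 1/(n+1) ≤ infDist z C'} := by
        ext z
        constructor
        · rintro ⟨hzW, hzC⟩
          refine ⟨hzW, ?_⟩
          by_contra hlt
          exact hzW (Or.inl (Or.inr ⟨hzC, not_le.1 hlt⟩))
        · rintro ⟨hzW, hzd⟩
          refine ⟨hzW, fun hzC => ?_⟩
          rw [Set.mem_setOf_eq, infDist_zero_of_mem hzC] at hzd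
          have hp : (0:ℝ) < 1/(n+1) := by positivity
          linarith
      rw [heq]
      exact hWnclosed.inter (isClosed_le continuous_const (continuous_infDist_pt C'))
    have hclos : closure (Metric.ball x' (r n)) ∩ closure (Metric.ball y' (r n)) = ∅ := by
      rw [Set.eq_empty_iff_forall_notMem]
      rintro z ⟨h1, h2⟩
      have h1' : dist z x' ≤ r n :=
        Metric.mem_closedBall.1 (Metric.closure_ball_subset_closedBall h1)
      have h2' : dist z y' ≤ r n :=
        Metric.mem_closedBall.1 (Metric.closure_ball_subset_closedBall h2)
      have htri : δ ≤ dist z x' + dist z y' := by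
        calc δ = dist x' y' := rfl
          _ ≤ dist x' z + dist z y' := dist_triangle _ _ _
          _ = dist z x' + dist z y' := by rw [dist_comm x' z]
      have h3 := hrd3 n
      linarith
    have hev : ∀ᶠ m in Filter.atTop, hausdorffDist (Q m) Qinf < r n :=
      htend.eventually_lt_const (hr0 n)
    obtain ⟨N, hN⟩ := Filter.eventually_atTop.1 hev
    have key : ∀ j : ℕ, ∃ D : Set ↥K,
        ((∃ z ∈ Wn, D = connectedComponentIn Wn z) ∧
          (D ∩ frontier (U n)).Nonempty ∧ (D ∩ frontier (V n)).Nonempty) ∧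
        D.Nonempty ∧ D ⊆ Subtype.val ⁻¹' (Q (N + j)) := by
      intro j
      set m := N + j with hmdef
      obtain ⟨z₀, hz₀F, hQm⟩ := hQcomp m
      have hQmsub : Q m ⊆ F := by rw [hQm]; exact connectedComponentIn_subset _ _
      have hQmne : (Q m).Nonempty := ⟨z₀, by rw [hQm]; exact mem_connectedComponentIn hz₀F⟩
      have hQmconn : IsConnected (Q m) := by
        rw [hQm]; exact isConnected_connectedComponentIn_iff.mpr hz₀F
      have hQmcompact : IsCompact (Q m) := by
        haveI : CompactSpace ↥F := isCompact_iff_compactSpace.mp hFc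
        rw [hQm, connectedComponentIn_eq_image hz₀F]
        exact isClosed_connectedComponent.isCompact.image continuous_subtype_val
      have hfin : Metric.hausdorffEDist Qinf (Q m) ≠ ⊤ := by
        rw [EMetric.hausdorffEdist_comm]
        exact Metric.hausdorffEdist_ne_top_of_nonempty_of_bounded hQmne ⟨x, hxQ⟩
          hQmcompact.isBounded hQinfc.isBounded
      have hmN : N ≤ m := Nat.le_add_right N j
      have hxnear : infDist x (Q m) < r n := by
        have h1 := infDist_le_hausdorffDist_of_mem hxQ hfin
        rw [hausdorffDist_comm] at h1
        exact lt_of_le_of_lt h1 (hN m hmN)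
      have hynear : infDist y (Q m) < r n := by
        have h1 := infDist_le_hausdorffDist_of_mem hyQ hfin
        rw [hausdorffDist_comm] at h1
        exact lt_of_le_of_lt h1 (hN m hmN)
      obtain ⟨w, hwQ, hwd⟩ := (infDist_lt_iff hQmne).1 hxnear
      obtain ⟨w₂, hw₂Q, hw₂d⟩ := (infDist_lt_iff hQmne).1 hynear
      set Q' : Set ↥K := Subtype.val ⁻¹' (Q m) with hQ'def
      have hQ'sub : Q' ⊆ C' := fun z hz => hQmsub hz
      set w' : ↥K := ⟨w, (hQmsub hwQ).1⟩ with hw'def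
      set w₂' : ↥K := ⟨w₂, (hQmsub hw₂Q).1⟩ with hw₂'def
      have hw'mem : w' ∈ Q' ∩ Metric.ball x' (r n) := by
        refine ⟨hwQ, ?_⟩
        rw [Metric.mem_ball]
        have : dist w' x' = dist w x := rfl
        rw [this, dist_comm]
        exact hwd
      have hw₂'mem : w₂' ∈ Q' ∩ Metric.ball y' (r n) := by
        refine ⟨hw₂Q, ?_⟩
        rw [Metric.mem_ball]
        have : dist w₂' y' = dist w₂ y := rfl
        rw [this, dist_comm]
        exact hw₂d
      have himg : Subtype.val '' Q' = Q m :=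
        Set.image_preimage_eq_of_subset
          (by rw [Subtype.range_val]; exact fun z hz => (hQmsub hz).1)
      have hQ'pre : IsPreconnected Q' := by
        rw [← IsInducing.subtypeVal.isPreconnected_image, himg]
        exact hQmconn.isPreconnected
      have hQ'c : IsCompact Q' :=
        IsInducing.subtypeVal.isCompact_preimage
          (by rw [Subtype.range_val]; exact hK.isClosed) hQmcompact
      obtain ⟨z, hzW, hcu, hcv⟩ := cutwire hQ'c hQ'pre Metric.isOpen_ball Metric.isOpen_ball
        hclos ⟨w', hw'mem⟩ ⟨w₂', hw₂'mem⟩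
      set Wm : Set ↥K := Q' \ (Metric.ball x' (r n) ∪ Metric.ball y' (r n)) with hWmdef
      have hWmsub : Wm ⊆ Wn := by
        rintro z' ⟨hz'Q, hz'b⟩
        intro hmem
        rcases hmem with (h | h) | (h | h)
        · exact hz'b (Or.inl h)
        · exact h.1 (hQ'sub hz'Q)
        · exact hz'b (Or.inr h)
        · exact h.1 (hQ'sub hz'Q)
      have hzWn : z ∈ Wn := hWmsub hzW
      set D : Set ↥K := connectedComponentIn Wn z with hDdef
      have hDconn : IsConnected D := isConnected_connectedComponentIn_iff.mpr hzWn
      have hDsubWn : D ⊆ Wn := connectedComponentIn_subset _ _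
      have hE : connectedComponentIn Wm z ⊆ D :=
        (isConnected_connectedComponentIn_iff.mpr hzW).isPreconnected.subset_connectedComponentIn
          (mem_connectedComponentIn hzW) ((connectedComponentIn_subset _ _).trans hWmsub)
      have hDC' : D ⊆ C' := by
        by_contra hnot
        obtain ⟨a, haD, haC⟩ := Set.not_subset.1 hnot
        have hres := isPreconnected_closed_iff.1 hDconn.isPreconnected C' (Wn \ C')
          hC'closed hWndiff
          (fun b hb => (Classical.em (b ∈ C')).imp id (fun h => ⟨hDsubWn hb, h⟩))
          ⟨z, mem_connectedComponentIn hzWn, hQ'sub hzW.1⟩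
          ⟨a, haD, hDsubWn haD, haC⟩
        obtain ⟨b, -, hb1, hb2⟩ := hres
        exact hb2.2 hb1
      have hzQm : (z : S) ∈ Q m := hzW.1
      have hQmeq : Q m = connectedComponentIn F (z : S) := by
        rw [hQm]
        exact connectedComponentIn_eq (by rw [← hQm]; exact hzQm)
      have hDQ' : D ⊆ Q' := by
        have hTpre : IsPreconnected ((Subtype.val '' D) ∪ Q m) :=
          IsPreconnected.union (z : S)
            (Set.mem_image_of_mem _ (mem_connectedComponentIn hzWn)) hzQm
            (hDconn.isPreconnected.image _ continuous_subtype_val.continuousOn)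
            hQmconn.isPreconnected
        have hTsub : (Subtype.val '' D) ∪ Q m ⊆ F :=
          Set.union_subset (Set.image_subset_iff.2 hDC') hQmsub
        have hcc := hTpre.subset_connectedComponentIn (Or.inr hzQm) hTsub
        rw [← hQmeq] at hcc
        exact Set.image_subset_iff.1 (Set.subset_union_left.trans hcc)
      have hfrontU : (D ∩ frontier (U n)).Nonempty := by
        obtain ⟨a, haE, hacl⟩ := hcu
        refine ⟨a, hE haE, ?_⟩
        rw [(hUopen n).frontier_eq]
        exact ⟨closure_mono Set.subset_union_left hacl,
          fun hmem => (hWmsub (connectedComponentIn_subset _ _ haE)) (Or.inl hmem)⟩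
      have hfrontV : (D ∩ frontier (V n)).Nonempty := by
        obtain ⟨a, haE, hacl⟩ := hcv
        refine ⟨a, hE haE, ?_⟩
        rw [(hVopen n).frontier_eq]
        exact ⟨closure_mono Set.subset_union_left hacl,
          fun hmem => (hWmsub (connectedComponentIn_subset _ _ haE)) (Or.inr hmem)⟩
      exact ⟨D, ⟨⟨z, hzWn, rfl⟩, hfrontU, hfrontV⟩,
        ⟨z, mem_connectedComponentIn hzWn⟩, hDQ'⟩
    choose D hDmem hDne hDsub using key
    apply Set.infinite_of_injective_forall_mem (f := D)
    · intro j j' hjj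
      by_contra hne2
      obtain ⟨a, ha⟩ := hDne j
      have ha' : a ∈ D j' := hjj ▸ ha
      have haj : (a : S) ∈ Q (N + j) := hDsub j ha
      have haj' : (a : S) ∈ Q (N + j') := hDsub j' ha'
      obtain ⟨z₁, hz₁, hQ1⟩ := hQcomp (N + j)
      obtain ⟨z₂, hz₂, hQ2⟩ := hQcomp (N + j')
      have heqQ : Q (N + j) = Q (N + j') := by
        rw [hQ1, connectedComponentIn_eq (x := z₁) (y := (a : S)) (by rw [← hQ1]; exact haj)]
        rw [hQ2, connectedComponentIn_eq (x := z₂) (y := (a : S)) (by rw [← hQ2]; exact haj')]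
      exact hQdist (N + j) (N + j') (by omega) heqQ
    · exact fun j => hDmem j
end

section
/- Let f : S₁ → S₂ be a covering map from a closed surface S₁ onto a closed surface S₂, each equipped with a fixed metric inducing its topology. Let K ⊆ S₂ be a nonempty compact set and L = f⁻¹(K). If x ∈ K, u ∈ f⁻¹(x), and y ∈ R_K(x), then there exists v ∈ R_L(u) with f(v) = y. -/
open Set Metric Filter Topology unitInterval

section Lifting

variable {E X : Type*} [TopologicalSpace E] [TopologicalSpace X] {f : E → X}

/-- The property that `Φ` admits continuous lifts through any prescribed point over `A`. -/
def LiftOnSet (f : E → X) (Φ : ℝ × ℝ → X) (A : Set (ℝ × ℝ)) : Prop :=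
  ∀ q ∈ A, ∀ e : E, f e = Φ q →
    ∃ Ψ : ℝ × ℝ → E, ContinuousOn Ψ A ∧ (∀ p ∈ A, f (Ψ p) = Φ p) ∧ Ψ q = e

lemma liftOnSet_of_subset_baseSet {F : Type*} [TopologicalSpace F] (T : Bundle.Trivialization F f)
    {Φ : ℝ × ℝ → X} (hΦ : Continuous Φ) {A : Set (ℝ × ℝ)}
    (hA : ∀ p ∈ A, Φ p ∈ T.baseSet) : LiftOnSet f Φ A := by
  intro q hq e he
  have hesrc : e ∈ T.source := T.mem_source.2 (by rw [he]; exact hA q hq)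
  refine ⟨fun p => T.toOpenPartialHomeomorph.symm (Φ p, (T e).2), ?_, ?_, ?_⟩
  · refine T.toOpenPartialHomeomorph.continuousOn_symm.comp
      ((hΦ.prodMk continuous_const).continuousOn) ?_
    intro p hp
    rw [T.target_eq]
    exact ⟨hA p hp, mem_univ _⟩
  · intro p hp
    exact T.proj_symm_apply (by rw [T.target_eq]; exact ⟨hA p hp, mem_univ _⟩)
  · have h1 : (Φ q, (T e).2) = T e := by
      have := T.coe_fst hesrc
      rw [← he] at *
      exact Prod.ext (by rw [this]) rfl
    show T.toOpenPartialHomeomorph.symm (Φ q, (T e).2) = e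
    rw [h1]
    exact T.toOpenPartialHomeomorph.left_inv hesrc

lemma liftOnSet_union_aux (hf : IsCoveringMap f) {Φ : ℝ × ℝ → X}
    {A B : Set (ℝ × ℝ)} (hAc : IsClosed A) (hBc : IsClosed B)
    (hconn : IsPreconnected (A ∩ B)) (hne : (A ∩ B).Nonempty)
    (lA : LiftOnSet f Φ A) (lB : LiftOnSet f Φ B) :
    ∀ q ∈ A, ∀ e : E, f e = Φ q →
      ∃ Ψ : ℝ × ℝ → E, ContinuousOn Ψ (A ∪ B) ∧ (∀ p ∈ A ∪ B, f (Ψ p) = Φ p) ∧ Ψ q = e := by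
  classical
  intro q hq e he
  obtain ⟨ΨA, hΨAc, hΨAf, hΨAq⟩ := lA q hq e he
  obtain ⟨w, hw⟩ := hne
  obtain ⟨ΨB, hΨBc, hΨBf, hΨBw⟩ := lB w hw.2 (ΨA w) (hΨAf w hw.1)
  have heqon : (A ∩ B).EqOn ΨA ΨB := by
    refine hf.eqOn_of_comp_eqOn hconn (hΨAc.mono inter_subset_left)
      (hΨBc.mono inter_subset_right) ?_ hw hΨBw.symm
    intro p hp
    simp only [Function.comp_apply, hΨAf p hp.1, hΨBf p hp.2]
  refine ⟨fun p => if p ∈ A then ΨA p else ΨB p, ?_, ?_, ?_⟩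
  · have hBeq : ∀ p ∈ B, (if p ∈ A then ΨA p else ΨB p) = ΨB p := by
      intro p hp
      by_cases hpA : p ∈ A
      · simp only [hpA, if_true]; exact heqon ⟨hpA, hp⟩
      · simp only [hpA, if_false]
    intro p hp
    refine ContinuousWithinAt.union ?_ ?_
    · by_cases hpA : p ∈ A
      · exact ((hΨAc p hpA).congr (fun z hz => by simp [hz]) (by simp [hpA]))
      · exact continuousWithinAt_of_notMem_closure (by rwa [hAc.closure_eq])
    · by_cases hpB : p ∈ B
      · exact ((hΨBc p hpB).congr hBeq (hBeq p hpB))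
      · exact continuousWithinAt_of_notMem_closure (by rwa [hBc.closure_eq])
  · intro p hp
    by_cases hpA : p ∈ A
    · simp only [hpA, if_true]; exact hΨAf p hpA
    · have hpB : p ∈ B := hp.resolve_left hpA
      simp only [hpA, if_false]; exact hΨBf p hpB
  · simp only [hq, if_true]; exact hΨAq

lemma LiftOnSet.union (hf : IsCoveringMap f) {Φ : ℝ × ℝ → X}
    {A B : Set (ℝ × ℝ)} (hAc : IsClosed A) (hBc : IsClosed B)
    (hconn : IsPreconnected (A ∩ B)) (hne : (A ∩ B).Nonempty)
    (lA : LiftOnSet f Φ A) (lB : LiftOnSet f Φ B) : LiftOnSet f Φ (A ∪ B) := by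
  intro q hq e he
  rcases hq with hq | hq
  · exact liftOnSet_union_aux hf hAc hBc hconn hne lA lB q hq e he
  · obtain ⟨Ψ, h1, h2, h3⟩ := liftOnSet_union_aux hf hBc hAc
      (by rwa [inter_comm]) (by rwa [inter_comm]) lB lA q hq e he
    exact ⟨Ψ, by rwa [union_comm], fun p hp => h2 p (union_comm A B ▸ hp), h3⟩

lemma liftOnSet_unitSquare (hf : IsCoveringMap f) (hsurj : Function.Surjective f)
    {Φ : ℝ × ℝ → X} (hΦ : Continuous Φ) :
    LiftOnSet f Φ (Icc (0:ℝ) 1 ×ˢ Icc (0:ℝ) 1) := by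
  haveI : ∀ z, Nonempty (f ⁻¹' {z}) := fun z => ⟨⟨_, (hsurj z).choose_spec⟩⟩
  -- Lebesgue number for the cover by evenly-covered preimages
  have hcov : (Icc (0:ℝ) 1 ×ˢ Icc (0:ℝ) 1) ⊆
      ⋃ z : X, Φ ⁻¹' (hf z).toTrivialization.baseSet := by
    intro p _
    exact mem_iUnion.2 ⟨Φ p, (hf (Φ p)).mem_toTrivialization_baseSet⟩
  obtain ⟨δ, hδ, hball⟩ := lebesgue_number_lemma_of_metric
    (isCompact_Icc.prod isCompact_Icc)
    (fun z => ((hf z).toTrivialization.open_baseSet).preimage hΦ) hcov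
  obtain ⟨n, hn⟩ := exists_nat_one_div_lt hδ
  set N : ℕ := n + 1 with hN
  have hNpos : (0:ℝ) < N := by positivity
  have hcell : ∀ i j : ℕ, i < N → j < N →
      LiftOnSet f Φ (Icc ((i:ℝ)/N) ((i+1)/N) ×ˢ Icc ((j:ℝ)/N) ((j+1)/N)) := by
    intro i j hi hj
    have hcorner : ((i:ℝ)/N, (j:ℝ)/N) ∈ Icc (0:ℝ) 1 ×ˢ Icc (0:ℝ) 1 := by
      constructor <;> constructor
      · positivity
      · rw [div_le_one hNpos]; exact_mod_cast hi.le
      · positivity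
      · rw [div_le_one hNpos]; exact_mod_cast hj.le
    obtain ⟨z, hz⟩ := hball _ hcorner
    refine liftOnSet_of_subset_baseSet (hf z).toTrivialization hΦ ?_
    intro p hp
    refine hz ?_
    have h1 : dist p.1 ((i:ℝ)/N) < δ := by
      rw [Real.dist_eq, abs_of_nonneg (by linarith [hp.1.1])]
      have : p.1 ≤ ((i:ℝ)+1)/N := hp.1.2
      have h1N : ((i:ℝ)+1)/N - (i:ℝ)/N = 1/N := by ring
      calc p.1 - (i:ℝ)/N ≤ 1/N := by linarith [hp.1.2, h1N]
        _ < δ := by rw [hN]; push_cast; exact hn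
    have h2 : dist p.2 ((j:ℝ)/N) < δ := by
      rw [Real.dist_eq, abs_of_nonneg (by linarith [hp.2.1])]
      have h1N : ((j:ℝ)+1)/N - (j:ℝ)/N = 1/N := by ring
      calc p.2 - (j:ℝ)/N ≤ 1/N := by linarith [hp.2.2, h1N]
        _ < δ := by rw [hN]; push_cast; exact hn
    have : dist p ((i:ℝ)/N, (j:ℝ)/N) < δ := by
      rw [Prod.dist_eq]
      exact max_lt h1 h2
    exact this
  -- horizontal strips
  have hstrip : ∀ j : ℕ, j < N → ∀ i : ℕ, 1 ≤ i → i ≤ N →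
      LiftOnSet f Φ (Icc (0:ℝ) ((i:ℝ)/N) ×ˢ Icc ((j:ℝ)/N) ((j+1)/N)) := by
    intro j hj i hi1
    induction i, hi1 using Nat.le_induction with
    | base =>
      intro _
      have := hcell 0 j (by omega) hj
      simpa using this
    | succ i hi ih =>
      intro hiN
      have hIcc : Icc (0:ℝ) (((i:ℝ)+1)/N) = Icc (0:ℝ) ((i:ℝ)/N) ∪ Icc ((i:ℝ)/N) (((i:ℝ)+1)/N) := by
        rw [Set.Icc_union_Icc_eq_Icc (by positivity)
          (by apply div_le_div_of_nonneg_right ?_ hNpos.le; linarith)]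
      have hstep : LiftOnSet f Φ ((Icc (0:ℝ) ((i:ℝ)/N) ∪ Icc ((i:ℝ)/N) (((i:ℝ)+1)/N))
          ×ˢ Icc ((j:ℝ)/N) ((j+1)/N)) := by
        rw [Set.union_prod]
        refine LiftOnSet.union hf (isClosed_Icc.prod isClosed_Icc)
          (isClosed_Icc.prod isClosed_Icc) ?_ ?_ (ih (by omega)) (hcell i j (by omega) hj)
        · rw [Set.prod_inter_prod, Set.Icc_inter_Icc, Set.inter_self]
          rw [max_eq_right (by positivity), min_eq_left
            (by apply div_le_div_of_nonneg_right ?_ hNpos.le; linarith), Set.Icc_self]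
          exact isPreconnected_singleton.prod isPreconnected_Icc
        · rw [Set.prod_inter_prod, Set.Icc_inter_Icc, Set.inter_self]
          rw [max_eq_right (by positivity), min_eq_left
            (by apply div_le_div_of_nonneg_right ?_ hNpos.le; linarith), Set.Icc_self]
          refine ⟨((i:ℝ)/N, (j:ℝ)/N), rfl, ?_⟩
          exact ⟨le_rfl, by apply div_le_div_of_nonneg_right ?_ hNpos.le; linarith⟩
      rw [show (((i+1:ℕ)):ℝ) = ((i:ℝ)+1) by push_cast; ring, hIcc]
      exact hstep
  -- stack rows
  have hrow : ∀ j : ℕ, j < N → LiftOnSet f Φ (Icc (0:ℝ) 1 ×ˢ Icc ((j:ℝ)/N) ((j+1)/N)) := by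
    intro j hj
    have := hstrip j hj N (by omega) le_rfl
    rwa [div_self (ne_of_gt hNpos)] at this
  have hfull : ∀ j : ℕ, 1 ≤ j → j ≤ N →
      LiftOnSet f Φ (Icc (0:ℝ) 1 ×ˢ Icc (0:ℝ) ((j:ℝ)/N)) := by
    intro j hj1
    induction j, hj1 using Nat.le_induction with
    | base =>
      intro _
      have := hrow 0 (by omega)
      simpa using this
    | succ j hj ih =>
      intro hjN
      have hIcc : Icc (0:ℝ) (((j:ℝ)+1)/N) = Icc (0:ℝ) ((j:ℝ)/N) ∪ Icc ((j:ℝ)/N) (((j:ℝ)+1)/N) := by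
        rw [Set.Icc_union_Icc_eq_Icc (by positivity)
          (by apply div_le_div_of_nonneg_right ?_ hNpos.le; linarith)]
      rw [show (((j+1:ℕ)):ℝ) = ((j:ℝ)+1) by push_cast; ring, hIcc, Set.prod_union]
      refine LiftOnSet.union hf (isClosed_Icc.prod isClosed_Icc)
        (isClosed_Icc.prod isClosed_Icc) ?_ ?_ (ih (by omega)) (hrow j (by omega))
      · rw [Set.prod_inter_prod, Set.inter_self, Set.Icc_inter_Icc]
        rw [max_eq_right (by positivity), min_eq_left
          (by apply div_le_div_of_nonneg_right ?_ hNpos.le; linarith), Set.Icc_self]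
        exact isPreconnected_Icc.prod isPreconnected_singleton
      · rw [Set.prod_inter_prod, Set.inter_self, Set.Icc_inter_Icc]
        rw [max_eq_right (by positivity), min_eq_left
          (by apply div_le_div_of_nonneg_right ?_ hNpos.le; linarith), Set.Icc_self]
        refine ⟨(0, (j:ℝ)/N), ⟨⟨le_rfl, zero_le_one⟩, rfl⟩⟩
  have := hfull N (by omega) le_rfl
  rwa [div_self (ne_of_gt hNpos)] at this

lemma exists_squareLift (hf : IsCoveringMap f) (hsurj : Function.Surjective f) {φ : unitInterval × unitInterval → X}
    (hφ : Continuous φ) (q₀ : unitInterval × unitInterval) (e₀ : E) (he : f e₀ = φ q₀) :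
    ∃ ψ : unitInterval × unitInterval → E, Continuous ψ ∧ (∀ q, f (ψ q) = φ q) ∧ ψ q₀ = e₀ := by
  set Φ : ℝ × ℝ → X := fun p =>
    φ (projIcc 0 1 zero_le_one p.1, projIcc 0 1 zero_le_one p.2) with hΦdef
  have hΦc : Continuous Φ :=
    hφ.comp ((continuous_projIcc.comp continuous_fst).prodMk
      (continuous_projIcc.comp continuous_snd))
  have hmem : ((q₀.1 : ℝ), (q₀.2 : ℝ)) ∈ Icc (0:ℝ) 1 ×ˢ Icc (0:ℝ) 1 := ⟨q₀.1.2, q₀.2.2⟩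
  have heq : ∀ q : unitInterval × unitInterval, Φ ((q.1 : ℝ), (q.2 : ℝ)) = φ q := by
    intro q
    simp only [hΦdef, projIcc_val]
  obtain ⟨Ψ, hΨc, hΨf, hΨq⟩ := liftOnSet_unitSquare hf hsurj hΦc ((q₀.1 : ℝ), (q₀.2 : ℝ)) hmem e₀
    (by rw [heq]; exact he)
  refine ⟨fun q => Ψ ((q.1 : ℝ), (q.2 : ℝ)), ?_, ?_, hΨq⟩
  · refine hΨc.comp_continuous ?_ ?_
    · exact (continuous_subtype_val.comp continuous_fst).prodMk
        (continuous_subtype_val.comp continuous_snd)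
    · intro q; exact ⟨q.1.2, q.2.2⟩
  · intro q
    rw [hΨf _ ⟨q.1.2, q.2.2⟩, heq]


end Lifting

lemma unif_transfer {Y Z : Type*} [MetricSpace Y] [MetricSpace Z]
    {φ : unitInterval × unitInterval → Y} {ψ : unitInterval × unitInterval → Z}
    (hφ : Topology.IsEmbedding φ) (hψ : Continuous ψ) :
    ∀ ε : ℝ, 0 < ε → ∃ δ > 0, ∀ p p' : unitInterval × unitInterval,
      dist (φ p) (φ p') < δ → dist (ψ p) (ψ p') < ε := by
  intro ε hε
  let e := hφ.toHomeomorph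
  haveI : CompactSpace (Set.range φ) := isCompact_iff_compactSpace.1 (isCompact_range hφ.continuous)
  have hχ : Continuous (ψ ∘ e.symm) := hψ.comp e.symm.continuous
  have huc := CompactSpace.uniformContinuous_of_continuous hχ
  rw [Metric.uniformContinuous_iff] at huc
  obtain ⟨δ, hδ, h⟩ := huc ε hε
  refine ⟨δ, hδ, ?_⟩
  intro p p' hd
  have hcoe : ∀ q, ((e q : Set.range φ) : Y) = φ q := fun q => rfl
  have ha : dist (e p) (e p') < δ := by
    rw [Subtype.dist_eq, hcoe, hcoe]
    exact hd
  have := h ha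
  simpa only [Function.comp_apply, Homeomorph.symm_apply_apply] using this

/-- Let `f : S₁ → S₂` be a (surjective) covering map between closed
surfaces, `K ⊆ S₂` nonempty compact and `L = f⁻¹(K)`. If `x ∈ K`, `u ∈ f⁻¹(x)` and
`y ∈ R_K(x)`, then there exists `v ∈ R_L(u)` with `f(v) = y`. -/
theorem exists_lift_of_schonfliesRel_coveringMap
    {S₁ S₂ : Type*}
    [MetricSpace S₁] [CompactSpace S₁] [ConnectedSpace S₁] [Nonempty S₁]
    [MetricSpace S₂] [CompactSpace S₂] [ConnectedSpace S₂] [Nonempty S₂]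
    (hS₁ : IsSurfaceLocallyEuclidean S₁) (hS₂ : IsSurfaceLocallyEuclidean S₂)
    (f : S₁ → S₂) (hf : IsCoveringMap f) (hfsurj : Function.Surjective f)
    (K : Set S₂) (hK : IsCompact K) (hKne : K.Nonempty)
    (L : Set S₁) (hL : L = f ⁻¹' K)
    (x : S₂) (hx : x ∈ K) (u : S₁) (hu : f u = x)
    (y : S₂) (hy : (x, y) ∈ schonfliesRel K) :
    ∃ v : S₁, (u, v) ∈ schonfliesRel L ∧ f v = y := by
  obtain ⟨hxK, hyK, hcase⟩ := hy
  have huL : u ∈ L := by rw [hL, mem_preimage, hu]; exact hxK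
  rcases hcase with heq | ⟨φ, hφemb, hxI, hyI, hbdy, Q, hQdist, hQcomp, hQside, Qinf,
    hQinfcpt, hQinfconn, htend, hxQ, hyQ⟩
  · exact ⟨u, ⟨huL, huL, Or.inl rfl⟩, hu.trans heq⟩
  obtain ⟨qx, hqx0, hqxφ⟩ := hxI
  obtain ⟨qy, hqy1, hqyφ⟩ := hyI
  have hφc := hφemb.continuous
  obtain ⟨ψ, hψc, hψf, hψx⟩ := exists_squareLift hf hfsurj hφc qx u (by rw [hu]; exact hqxφ.symm)
  have hψinj : Function.Injective ψ := fun a b h =>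
    hφemb.injective (by rw [← hψf a, ← hψf b, h])
  have hψemb : Topology.IsEmbedding ψ := (hψc.isClosedEmbedding hψinj).toIsEmbedding
  have hmemL : ∀ q, ψ q ∈ L ↔ φ q ∈ K := by intro q; rw [hL, mem_preimage, hψf]
  have hvL : ψ qy ∈ L := (hmemL qy).2 (by rw [hqyφ]; exact hyK)
  have himg : ∀ A ⊆ Set.range φ, φ '' (φ ⁻¹' A) = A := fun A hA =>
    image_preimage_eq_of_subset hA
  have hGne : ∀ A, A ⊆ Set.range φ → A.Nonempty → (ψ '' (φ ⁻¹' A)).Nonempty := by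
    rintro A hsub ⟨a, ha⟩
    obtain ⟨p, rfl⟩ := hsub ha
    exact ⟨ψ p, ⟨p, ha, rfl⟩⟩
  have hGsubD : ∀ A, A ⊆ K ∩ Set.range φ → ψ '' (φ ⁻¹' A) ⊆ L ∩ Set.range ψ := by
    rintro A hA w ⟨p, hp, rfl⟩
    exact ⟨(hmemL p).2 (hA hp).1, mem_range_self p⟩
  have hGpre : ∀ A, A ⊆ Set.range φ → IsPreconnected A → IsPreconnected (ψ '' (φ ⁻¹' A)) := by
    intro A hsub hA
    have h1 : IsPreconnected (φ ⁻¹' A) :=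
      (hφemb.toIsInducing.isPreconnected_image).1 (by rw [himg A hsub]; exact hA)
    exact (hψemb.toIsInducing.isPreconnected_image).2 h1
  have hGinj : ∀ A B, A ⊆ Set.range φ → B ⊆ Set.range φ →
      ψ '' (φ ⁻¹' A) = ψ '' (φ ⁻¹' B) → A = B := by
    intro A B hA hB h
    have h2 : φ ⁻¹' A = φ ⁻¹' B := hψinj.image_injective h
    rw [← himg A hA, ← himg B hB, h2]
  have hcompt : ∀ z ∈ K ∩ Set.range φ, ∀ p, φ p = z →
      ψ '' (φ ⁻¹' connectedComponentIn (K ∩ Set.range φ) z) =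
        connectedComponentIn (L ∩ Set.range ψ) (ψ p) := by
    intro z hz p hp
    have hzsub := connectedComponentIn_subset (K ∩ Set.range φ) z
    have hzsubR : connectedComponentIn (K ∩ Set.range φ) z ⊆ Set.range φ :=
      hzsub.trans inter_subset_right
    have hzmem : z ∈ connectedComponentIn (K ∩ Set.range φ) z := mem_connectedComponentIn hz
    have hwD : ψ p ∈ L ∩ Set.range ψ := ⟨(hmemL p).2 (hp ▸ hz.1), mem_range_self p⟩
    apply Subset.antisymm
    · refine IsPreconnected.subset_connectedComponentIn ?_ ?_ (hGsubD _ hzsub)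
      · exact hGpre _ hzsubR (isConnected_connectedComponentIn_iff.2 hz).isPreconnected
      · exact ⟨p, by rw [mem_preimage, hp]; exact hzmem, rfl⟩
    · intro w hw
      have hBD := connectedComponentIn_subset (L ∩ Set.range ψ) (ψ p)
      have hfim : f '' connectedComponentIn (L ∩ Set.range ψ) (ψ p) ⊆
          connectedComponentIn (K ∩ Set.range φ) z := by
        refine IsPreconnected.subset_connectedComponentIn ?_ ?_ ?_
        · exact ((isConnected_connectedComponentIn_iff.2 hwD).isPreconnected).image f
            hf.continuous.continuousOn
        · exact ⟨ψ p, mem_connectedComponentIn hwD, by rw [hψf, hp]⟩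
        · rintro b ⟨a, ha, rfl⟩
          obtain ⟨haL, r, rfl⟩ := hBD ha
          rw [hL, mem_preimage] at haL
          exact ⟨haL, by rw [hψf]; exact mem_range_self r⟩
      obtain ⟨hwL, r, rfl⟩ := hBD hw
      refine ⟨r, ?_, rfl⟩
      rw [mem_preimage, ← hψf r]
      exact hfim ⟨ψ r, hw, rfl⟩
  choose z hzC hQeq using hQcomp
  choose pz hpz using fun n => (hzC n).2
  have hQsub : ∀ n, Q n ⊆ K ∩ Set.range φ := fun n =>
    (hQeq n) ▸ connectedComponentIn_subset (K ∩ Set.range φ) (z n)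
  have hQne : ∀ n, (Q n).Nonempty := fun n =>
    ⟨z n, (hQeq n) ▸ mem_connectedComponentIn (hzC n)⟩
  have hbdd₂ : ∀ s : Set S₂, Bornology.IsBounded s := fun s =>
    (isCompact_univ.isBounded).subset (subset_univ s)
  have hfin : ∀ A B : Set S₂, A.Nonempty → B.Nonempty → EMetric.hausdorffEdist A B ≠ ⊤ :=
    fun A B hA hB => hausdorffEdist_ne_top_of_nonempty_of_bounded hA hB (hbdd₂ A) (hbdd₂ B)
  have hQinfne : Qinf.Nonempty := ⟨x, hxQ⟩
  have hCclosed : IsClosed (K ∩ Set.range φ) :=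
    (hK.inter_right (isCompact_range hφc).isClosed).isClosed
  have hCne : (K ∩ Set.range φ).Nonempty := ⟨x, hxK, ⟨qx, hqxφ⟩⟩
  have hQinfsub : Qinf ⊆ K ∩ Set.range φ := by
    intro w hw
    have key : ∀ n, infDist w (K ∩ Set.range φ) ≤ hausdorffDist (Q n) Qinf := by
      intro n
      have h1 : infDist w (K ∩ Set.range φ) ≤ infDist w (Q n) :=
        infDist_le_infDist_of_subset (hQsub n) (hQne n)
      have h2 : infDist w (Q n) ≤ hausdorffDist Qinf (Q n) :=
        infDist_le_hausdorffDist_of_mem hw (hfin _ _ hQinfne (hQne n))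
      rw [hausdorffDist_comm] at h2
      linarith
    have h0 : infDist w (K ∩ Set.range φ) ≤ 0 := ge_of_tendsto htend (Eventually.of_forall key)
    exact (hCclosed.mem_iff_infDist_zero hCne).2 (le_antisymm h0 infDist_nonneg)
  have hQinfR : Qinf ⊆ Set.range φ := hQinfsub.trans inter_subset_right
  have htrans : ∀ ε : ℝ, 0 < ε → ∃ δ > 0, ∀ A B : Set S₂, A.Nonempty → B.Nonempty →
      A ⊆ K ∩ Set.range φ → B ⊆ K ∩ Set.range φ → hausdorffDist A B < δ →
      hausdorffDist (ψ '' (φ ⁻¹' A)) (ψ '' (φ ⁻¹' B)) ≤ ε := by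
    intro ε hε
    obtain ⟨δ, hδ, hd⟩ := unif_transfer hφemb hψc ε hε
    refine ⟨δ, hδ, ?_⟩
    intro A B hAne hBne hAC hBC hAB
    have hfinAB := hfin A B hAne hBne
    refine hausdorffDist_le_of_infDist hε.le ?_ ?_
    · rintro w ⟨p, hp, rfl⟩
      obtain ⟨b, hb, hdb⟩ := exists_dist_lt_of_hausdorffDist_lt (show φ p ∈ A from hp) hAB hfinAB
      obtain ⟨p', rfl⟩ := (hBC hb).2
      calc infDist (ψ p) (ψ '' (φ ⁻¹' B)) ≤ dist (ψ p) (ψ p') :=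
            infDist_le_dist_of_mem ⟨p', hb, rfl⟩
        _ ≤ ε := (hd p p' hdb).le
    · rintro w ⟨p, hp, rfl⟩
      obtain ⟨a, ha, hda⟩ := exists_dist_lt_of_hausdorffDist_lt' (show φ p ∈ B from hp) hAB hfinAB
      obtain ⟨p', rfl⟩ := (hAC ha).2
      calc infDist (ψ p) (ψ '' (φ ⁻¹' A)) ≤ dist (ψ p) (ψ p') :=
            infDist_le_dist_of_mem ⟨p', ha, rfl⟩
        _ ≤ ε := by
            rw [dist_comm]
            exact (hd p' p (by simpa [dist_comm] using hda)).le
  refine ⟨ψ qy, ⟨huL, hvL, Or.inr ⟨ψ, hψemb, ⟨qx, hqx0, hψx⟩, ⟨qy, hqy1, rfl⟩, ?_,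
    fun n => ψ '' (φ ⁻¹' Q n), ?_, ?_, ?_, ψ '' (φ ⁻¹' Qinf), ?_, ?_, ?_, ?_, ?_⟩⟩,
    by rw [hψf, hqyφ]⟩
  · rintro w ⟨hwL, p, hpbd, rfl⟩
    have hpK : φ p ∈ K := (hmemL p).1 hwL
    rcases hbdy ⟨hpK, ⟨p, hpbd, rfl⟩⟩ with ⟨p', hp', hpe⟩ | ⟨p', hp', hpe⟩
    · exact Or.inl ⟨p, by rw [← hφemb.injective hpe]; exact hp', rfl⟩
    · exact Or.inr ⟨p, by rw [← hφemb.injective hpe]; exact hp', rfl⟩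
  · intro m n hmn h
    exact hQdist m n hmn (hGinj _ _ ((hQsub m).trans inter_subset_right)
      ((hQsub n).trans inter_subset_right) h)
  · intro n
    refine ⟨ψ (pz n), ⟨(hmemL _).2 (by rw [hpz n]; exact (hzC n).1), mem_range_self _⟩, ?_⟩
    have hcc := hcompt (z n) (hzC n) (pz n) (hpz n)
    rw [← hQeq n] at hcc
    exact hcc
  · intro n
    constructor
    · obtain ⟨s, hsQ, p', hp'0, rfl⟩ := (hQside n).1
      exact ⟨ψ p', ⟨p', hsQ, rfl⟩, ⟨p', hp'0, rfl⟩⟩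
    · obtain ⟨s, hsQ, p', hp'1, rfl⟩ := (hQside n).2
      exact ⟨ψ p', ⟨p', hsQ, rfl⟩, ⟨p', hp'1, rfl⟩⟩
  · exact ((hQinfcpt.isClosed.preimage hφc).isCompact).image hψc
  · exact ⟨hGne _ hQinfR hQinfne, hGpre _ hQinfR hQinfconn.isPreconnected⟩
  · rw [Metric.tendsto_atTop]
    intro ε hε
    obtain ⟨δ, hδ, hT⟩ := htrans (ε/2) (half_pos hε)
    obtain ⟨N, hN⟩ := Metric.tendsto_atTop.1 htend δ hδ
    refine ⟨N, fun n hn => ?_⟩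
    have h1 : hausdorffDist (Q n) Qinf < δ := by
      have := hN n hn
      rwa [Real.dist_eq, sub_zero, abs_of_nonneg hausdorffDist_nonneg] at this
    have h2 := hT (Q n) Qinf (hQne n) hQinfne (hQsub n) hQinfsub h1
    rw [Real.dist_eq, sub_zero, abs_of_nonneg hausdorffDist_nonneg]
    linarith
  · exact ⟨qx, by rw [mem_preimage, hqxφ]; exact hxQ, hψx⟩
  · exact ⟨qy, by rw [mem_preimage, hqyφ]; exact hyQ, rfl⟩
end

section
/- Let f : X → Y be a continuous open surjection from a compactum X onto a compactum Y, and let R_X ⊆ X × X and R_Y ⊆ Y × Y be reflexive symmetric relations such that f(R_X(x)) ⊇ R_Y(f(x)) for all x ∈ X. Then f(cl(R_X)(x)) ⊇ cl(R_Y)(f(x)) for all x ∈ X, where cl(R_X) denotes the closure of R_X in X × X, cl(R_Y) the closure of R_Y in Y × Y, and for a relation R the fiber is R(x) = {y : (x,y) ∈ R}. -/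
open Set Metric Filter Topology unitInterval

/-- Let `f : X → Y` be a continuous open surjection between compacta and
let `R_X`, `R_Y` be reflexive symmetric relations with `f(R_X(x)) ⊇ R_Y(f(x))` for all
`x`. Then `f(cl(R_X)(x)) ⊇ cl(R_Y)(f(x))` for all `x`, where closures are taken in the
product spaces. -/
theorem image_closure_fiber_superset
    {X Y : Type*} [MetricSpace X] [CompactSpace X] [Nonempty X]
    [MetricSpace Y] [CompactSpace Y] [Nonempty Y]
    (f : X → Y) (hcont : Continuous f) (hopen : IsOpenMap f)
    (hsurj : Function.Surjective f)
    (RX : Set (X × X)) (RY : Set (Y × Y))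
    (hRXrefl : ∀ x : X, (x, x) ∈ RX)
    (hRXsymm : ∀ x y : X, (x, y) ∈ RX → (y, x) ∈ RX)
    (hRYrefl : ∀ y : Y, (y, y) ∈ RY)
    (hRYsymm : ∀ a b : Y, (a, b) ∈ RY → (b, a) ∈ RY)
    (hfib : ∀ x : X, {b | (f x, b) ∈ RY} ⊆ f '' {y | (x, y) ∈ RX}) :
    ∀ x : X, {b | (f x, b) ∈ closure RY} ⊆ f '' {y | (x, y) ∈ closure RX} := by
  intro x b hb
  -- a sequence in RY converging to (f x, b)
  obtain ⟨p, hp, hpt⟩ := mem_closure_iff_seq_limit.mp hb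
  set a : ℕ → Y := fun n => (p n).1 with ha
  set c : ℕ → Y := fun n => (p n).2 with hc
  have hat : Tendsto a atTop (𝓝 (f x)) := (continuous_fst.tendsto _).comp hpt
  have hct : Tendsto c atTop (𝓝 b) := (continuous_snd.tendsto _).comp hpt
  -- fibers of f over a n
  have hKc : ∀ n, IsCompact (f ⁻¹' {a n}) := fun n =>
    (isClosed_singleton.preimage hcont).isCompact
  have hKne : ∀ n, (f ⁻¹' {a n}).Nonempty := fun n => hsurj (a n)
  choose xs hxsK hxsd using fun n => (hKc n).exists_infDist_eq_dist (hKne n) x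
  have hfx : ∀ n, f (xs n) = a n := fun n => hxsK n
  -- xs converges to x
  have hxt : Tendsto xs atTop (𝓝 x) := by
    rw [Metric.tendsto_atTop]
    intro ε hε
    have hopenball : IsOpen (f '' ball x ε) := hopen _ isOpen_ball
    have hmem : f x ∈ f '' ball x ε := ⟨x, mem_ball_self hε, rfl⟩
    have hev : ∀ᶠ n in atTop, a n ∈ f '' ball x ε :=
      hat (hopenball.mem_nhds hmem)
    obtain ⟨N, hN⟩ := hev.exists_forall_of_atTop
    refine ⟨N, fun n hn => ?_⟩
    obtain ⟨z, hz, hfz⟩ := hN n hn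
    have h1 : infDist x (f ⁻¹' {a n}) ≤ dist x z := infDist_le_dist_of_mem hfz
    have : dist x (xs n) < ε := by
      rw [← hxsd n]
      exact lt_of_le_of_lt h1 (by rwa [dist_comm, ← mem_ball])
    rwa [dist_comm] at this
  -- apply the fiber hypothesis at xs n
  have hmemfib : ∀ n, c n ∈ {b | (f (xs n), b) ∈ RY} := by
    intro n
    simp only [mem_setOf_eq, hfx]
    exact hp n
  choose ys hysR hfys using fun n => hfib (xs n) (hmemfib n)
  -- extract a convergent subsequence of ys
  obtain ⟨y, -, φ, hφ, hyt⟩ := isCompact_univ.tendsto_subseq (fun n => mem_univ (ys n))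
  refine ⟨y, ?_, ?_⟩
  · -- (x, y) ∈ closure RX
    have htend : Tendsto (fun n => (xs (φ n), ys (φ n))) atTop (𝓝 (x, y)) :=
      ((hxt.comp hφ.tendsto_atTop).prodMk_nhds hyt)
    exact mem_closure_of_tendsto htend (Eventually.of_forall fun n => hysR (φ n))
  · -- f y = b
    have h1 : Tendsto (fun n => f (ys (φ n))) atTop (𝓝 (f y)) :=
      (hcont.tendsto y).comp hyt
    have h2 : Tendsto (fun n => f (ys (φ n))) atTop (𝓝 b) := by
      simp only [hfys]
      exact hct.comp hφ.tendsto_atTop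
    exact tendsto_nhds_unique h1 h2
end

section
/- Let f : X → Y be a continuous open surjection from a compactum X onto a compactum Y. Let R_X ⊆ X × X and R_Y ⊆ Y × Y be closed reflexive symmetric relations such that f(R_X(x)) ⊇ R_Y(f(x)) for all x ∈ X. Let ∼_X be the minimal closed equivalence relation on X containing R_X (the intersection of all equivalence relations on X that contain R_X and are closed in X × X), and define ∼_Y analogously from R_Y. Then f([x]_{∼_X}) ⊇ [f(x)]_{∼_Y} for all x ∈ X, where [x]_{∼_X} denotes the ∼_X-equivalence class of x and [f(x)]_{∼_Y} the ∼_Y-equivalence class of f(x). -/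
open Set Metric Filter Topology unitInterval

/-- The minimal closed equivalence relation containing a relation `R` on a topological
space: the intersection of all closed equivalence relations containing `R`. -/
def minClosedEquiv {Z : Type*} [TopologicalSpace Z] (R : Set (Z × Z)) : Set (Z × Z) :=
  ⋂₀ {E | R ⊆ E ∧ IsClosed E ∧ (∀ z : Z, (z, z) ∈ E) ∧
    (∀ a b : Z, (a, b) ∈ E → (b, a) ∈ E) ∧
    (∀ a b c : Z, (a, b) ∈ E → (b, c) ∈ E → (a, c) ∈ E)}

lemma minClosedEquiv_props {Z : Type*} [TopologicalSpace Z] (R : Set (Z × Z)) :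
    R ⊆ minClosedEquiv R ∧ IsClosed (minClosedEquiv R) ∧
    (∀ z : Z, (z, z) ∈ minClosedEquiv R) ∧
    (∀ a b : Z, (a, b) ∈ minClosedEquiv R → (b, a) ∈ minClosedEquiv R) ∧
    (∀ a b c : Z, (a, b) ∈ minClosedEquiv R → (b, c) ∈ minClosedEquiv R →
      (a, c) ∈ minClosedEquiv R) :=
  ⟨fun p hp => mem_sInter.2 fun E hE => hE.1 hp,
    isClosed_sInter fun E hE => hE.2.1,
    fun z => mem_sInter.2 fun E hE => hE.2.2.1 z,
    fun a b h => mem_sInter.2 fun E hE => hE.2.2.2.1 a b (mem_sInter.1 h E hE),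
    fun a b c h1 h2 => mem_sInter.2 fun E hE =>
      hE.2.2.2.2 a b c (mem_sInter.1 h1 E hE) (mem_sInter.1 h2 E hE)⟩

lemma minClosedEquiv_le {Z : Type*} [TopologicalSpace Z] {R E : Set (Z × Z)}
    (h1 : R ⊆ E) (h2 : IsClosed E) (h3 : ∀ z : Z, (z, z) ∈ E)
    (h4 : ∀ a b : Z, (a, b) ∈ E → (b, a) ∈ E)
    (h5 : ∀ a b c : Z, (a, b) ∈ E → (b, c) ∈ E → (a, c) ∈ E) :
    minClosedEquiv R ⊆ E :=
  sInter_subset_of_mem ⟨h1, h2, h3, h4, h5⟩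

/-- Let `f : X → Y` be a continuous open surjection between compacta and
let `R_X`, `R_Y` be closed reflexive symmetric relations with `f(R_X(x)) ⊇ R_Y(f(x))` for
all `x`. If `∼_X` and `∼_Y` are the minimal closed equivalence relations containing `R_X`
resp. `R_Y`, then `f([x]_{∼_X}) ⊇ [f(x)]_{∼_Y}` for all `x ∈ X`. -/
theorem image_minClosedEquiv_class_superset
    {X Y : Type*} [MetricSpace X] [CompactSpace X] [Nonempty X]
    [MetricSpace Y] [CompactSpace Y] [Nonempty Y]
    (f : X → Y) (hcont : Continuous f) (hopen : IsOpenMap f)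
    (hsurj : Function.Surjective f)
    (RX : Set (X × X)) (RY : Set (Y × Y))
    (hRXcl : IsClosed RX) (hRYcl : IsClosed RY)
    (hRXrefl : ∀ x : X, (x, x) ∈ RX)
    (hRXsymm : ∀ x y : X, (x, y) ∈ RX → (y, x) ∈ RX)
    (hRYrefl : ∀ y : Y, (y, y) ∈ RY)
    (hRYsymm : ∀ a b : Y, (a, b) ∈ RY → (b, a) ∈ RY)
    (hfib : ∀ x : X, {b | (f x, b) ∈ RY} ⊆ f '' {y | (x, y) ∈ RX}) :
    ∀ x : X, {b | (f x, b) ∈ minClosedEquiv RY} ⊆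
      f '' {y | (x, y) ∈ minClosedEquiv RX} := by
  obtain ⟨hXsub, hXcl, hXrefl, hXsymm, hXtrans⟩ := minClosedEquiv_props RX
  set EX := minClosedEquiv RX with hEXdef
  -- the transfer relation on Y
  set E : Set (Y × Y) := {p | ∀ x : X, f x = p.1 → ∃ y : X, (x, y) ∈ EX ∧ f y = p.2}
    with hEdef
  -- RY ⊆ E
  have hRYE : RY ⊆ E := by
    rintro ⟨a, b⟩ hab x hx
    have hb : b ∈ {b | (f x, b) ∈ RY} := by simpa [hx] using hab
    obtain ⟨y, hy, hfy⟩ := hfib x hb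
    exact ⟨y, hXsub hy, hfy⟩
  -- E is closed (sequential argument, using openness of f)
  have hEcl : IsClosed E := by
    apply IsSeqClosed.isClosed
    intro p q hp hpq x hx
    -- choose `xs n` in the fiber of `(p n).1` minimizing distance to `x`
    have hfib_ne : ∀ n, {z : X | f z = (p n).1}.Nonempty := fun n => hsurj (p n).1
    have hfib_cl : ∀ n, IsCompact {z : X | f z = (p n).1} := fun n =>
      (isClosed_eq hcont continuous_const).isCompact
    choose xs hxs hxsmin using fun n =>
      (hfib_cl n).exists_isMinOn (hfib_ne n)
        ((continuous_id.dist continuous_const).continuousOn (s := {z : X | f z = (p n).1}))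
    have hp1 : Tendsto (fun n => (p n).1) atTop (𝓝 q.1) :=
      (continuous_fst.tendsto q).comp hpq
    have hp2 : Tendsto (fun n => (p n).2) atTop (𝓝 q.2) :=
      (continuous_snd.tendsto q).comp hpq
    have hxconv : Tendsto xs atTop (𝓝 x) := by
      rw [Metric.tendsto_atTop]
      intro ε hε
      have hob : IsOpen (f '' ball x ε) := hopen _ isOpen_ball
      have hq1 : q.1 ∈ f '' ball x ε := ⟨x, mem_ball_self hε, hx⟩
      have hev : ∀ᶠ n in atTop, (p n).1 ∈ f '' ball x ε :=
        hp1.eventually (hob.mem_nhds hq1 |> eventually_mem_nhds_iff.mpr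
          |>.mono fun _ h => mem_of_mem_nhds h)
      obtain ⟨N, hN⟩ := eventually_atTop.1 hev
      refine ⟨N, fun n hn => ?_⟩
      obtain ⟨x', hx'ball, hx'f⟩ := hN n hn
      calc dist (xs n) x ≤ dist x' x := hxsmin n (show x' ∈ {z : X | f z = (p n).1} from hx'f)
        _ < ε := mem_ball.1 hx'ball
    -- choose witnesses over the moved fibers
    choose ys hys hfys using fun n => hp n (xs n) (hxs n)
    obtain ⟨y0, -, φ, hφ, hyconv⟩ := isCompact_univ.tendsto_subseq
      (fun n => (mem_univ (ys n)))
    refine ⟨y0, ?_, ?_⟩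
    · exact hXcl.mem_of_tendsto
        (((hxconv.comp hφ.tendsto_atTop).prodMk_nhds hyconv))
        (Eventually.of_forall fun n => hys (φ n))
    · refine tendsto_nhds_unique ((hcont.tendsto y0).comp hyconv) ?_
      have heq : (f ∘ ys ∘ φ) = fun n => (p (φ n)).2 := funext fun n => hfys (φ n)
      rw [heq]
      exact hp2.comp hφ.tendsto_atTop
  -- E is reflexive and transitive
  have hErefl : ∀ z : Y, (z, z) ∈ E := fun z x hx => ⟨x, hXrefl x, hx⟩
  have hEtrans : ∀ a b c : Y, (a, b) ∈ E → (b, c) ∈ E → (a, c) ∈ E := by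
    intro a b c hab hbc x hx
    obtain ⟨y, hxy, hfy⟩ := hab x hx
    obtain ⟨z, hyz, hfz⟩ := hbc y hfy
    exact ⟨z, hXtrans x y z hxy hyz, hfz⟩
  -- symmetrize
  set E' : Set (Y × Y) := E ∩ (Prod.swap ⁻¹' E) with hE'def
  have hsub : minClosedEquiv RY ⊆ E' := by
    refine minClosedEquiv_le ?_ ?_ ?_ ?_ ?_
    · exact fun p hp => ⟨hRYE hp, hRYE (hRYsymm p.1 p.2 (by simpa using hp))⟩
    · exact hEcl.inter (hEcl.preimage continuous_swap)
    · exact fun z => ⟨hErefl z, hErefl z⟩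
    · rintro a b ⟨h1, h2⟩
      exact ⟨h2, h1⟩
    · rintro a b c ⟨h1, h1'⟩ ⟨h2, h2'⟩
      exact ⟨hEtrans a b c h1 h2, hEtrans c b a h2' h1'⟩
  -- conclude
  intro x b hb
  obtain ⟨y, hy, hfy⟩ := (hsub hb).1 x rfl
  exact ⟨y, hy, hfy⟩
end

section
/- Let K₀ = (({0} ∪ {1/n : n ∈ ℕ, n ≥ 1}) × [0,1]²) ∪ ([0,1]² × {0}) ⊆ ℝ³, and let D₁ be the partition of K₀ consisting of the line segments {0} × {t} × [0,1] for t ∈ [0,1] together with all singletons {(x₁,x₂,x₃)} with (x₁,x₂,x₃) ∈ K₀ and x₁ > 0. Then D₁ is an atomic decomposition of K₀ with Peano quotient: D₁ is a Peano decomposition of K₀, and no Peano decomposition of K₀ other than D₁ refines D₁. -/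
open Set Metric Filter Topology unitInterval

/-- The continuum
`K₀ = (({0} ∪ {1/n : n ≥ 1}) × [0,1]²) ∪ ([0,1]² × {0}) ⊆ ℝ³`. -/
def Kzero : Set (ℝ × ℝ × ℝ) :=
  ((insert (0 : ℝ) {x : ℝ | ∃ n : ℕ, x = 1 / (n + 1)}) ×ˢ
      (Set.Icc (0 : ℝ) 1 ×ˢ Set.Icc (0 : ℝ) 1)) ∪
    (Set.Icc (0 : ℝ) 1 ×ˢ (Set.Icc (0 : ℝ) 1 ×ˢ ({0} : Set ℝ)))

/-- The decomposition `D₁` of `K₀`: the segments `{0} × {t} × [0,1]` for `t ∈ [0,1]`,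
together with all singletons `{(x₁, x₂, x₃)}` of points of `K₀` with `x₁ > 0`. -/
def Done : Set (Set (ℝ × ℝ × ℝ)) :=
  {δ | (∃ t ∈ Set.Icc (0 : ℝ) 1,
      δ = ({0} : Set ℝ) ×ˢ (({t} : Set ℝ) ×ˢ Set.Icc (0 : ℝ) 1)) ∨
    (∃ p ∈ Kzero, 0 < p.1 ∧ δ = {p})}

section ADhelp

open Set Metric Filter Topology

/-- The vertical segment `{0} × {t} × [0,1]`. -/
def ADseg (t : ℝ) : Set (ℝ × ℝ × ℝ) :=
  ({0} : Set ℝ) ×ˢ (({t} : Set ℝ) ×ˢ Set.Icc (0 : ℝ) 1)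

def ADS : Set ℝ := insert (0 : ℝ) {x : ℝ | ∃ n : ℕ, x = 1 / (n + 1)}

lemma ADS_subset_Icc : ADS ⊆ Set.Icc (0 : ℝ) 1 := by
  rintro x (rfl | ⟨n, rfl⟩)
  · exact ⟨le_refl 0, zero_le_one⟩
  · have hn : (0:ℝ) < (n:ℝ) + 1 := by positivity
    constructor
    · positivity
    · rw [div_le_one hn]
      simp [Nat.cast_nonneg]

lemma ADS_cases {x : ℝ} (hx : x ∈ ADS) : x = 0 ∨ ∃ n : ℕ, x = 1 / (n + 1) := hx

lemma ADS_pos {x : ℝ} (hx : x ∈ ADS) (h : x ≠ 0) : 0 < x := by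
  rcases hx with rfl | ⟨n, rfl⟩
  · exact absurd rfl h
  · positivity

lemma isCompact_ADS : IsCompact ADS := by
  have h := (tendsto_one_div_add_atTop_nhds_zero_nat (𝕜 := ℝ)).isCompact_insert_range
  convert h using 1
  ext x
  simp only [ADS, Set.mem_insert_iff, Set.mem_setOf_eq, Set.mem_range, one_div]
  constructor
  · rintro (rfl | ⟨n, rfl⟩)
    · exact Or.inl rfl
    · exact Or.inr ⟨n, rfl⟩
  · rintro (rfl | ⟨n, rfl⟩)
    · exact Or.inl rfl
    · exact Or.inr ⟨n, rfl⟩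

lemma mem_Kzero {p : ℝ × ℝ × ℝ} :
    p ∈ Kzero ↔ (p.1 ∈ ADS ∧ p.2.1 ∈ Set.Icc (0:ℝ) 1 ∧ p.2.2 ∈ Set.Icc (0:ℝ) 1) ∨
      (p.1 ∈ Set.Icc (0:ℝ) 1 ∧ p.2.1 ∈ Set.Icc (0:ℝ) 1 ∧ p.2.2 = 0) := by
  simp only [Kzero, ADS, Set.mem_union, Set.mem_prod, Set.mem_singleton_iff]

lemma Kzero_coords {p : ℝ × ℝ × ℝ} (hp : p ∈ Kzero) :
    p.1 ∈ Set.Icc (0:ℝ) 1 ∧ p.2.1 ∈ Set.Icc (0:ℝ) 1 ∧ p.2.2 ∈ Set.Icc (0:ℝ) 1 := by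
  rcases mem_Kzero.mp hp with ⟨h1, h2, h3⟩ | ⟨h1, h2, h3⟩
  · exact ⟨ADS_subset_Icc h1, h2, h3⟩
  · refine ⟨h1, h2, ?_⟩
    rw [h3]
    exact ⟨le_refl 0, zero_le_one⟩

lemma Kzero_zpos {p : ℝ × ℝ × ℝ} (hp : p ∈ Kzero) (hz : p.2.2 ≠ 0) : p.1 ∈ ADS := by
  rcases mem_Kzero.mp hp with ⟨h1, _, _⟩ | ⟨_, _, h3⟩
  · exact h1
  · exact absurd h3 hz

lemma mem_ADseg {t : ℝ} {p : ℝ × ℝ × ℝ} :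
    p ∈ ADseg t ↔ p.1 = 0 ∧ p.2.1 = t ∧ p.2.2 ∈ Set.Icc (0:ℝ) 1 := by
  simp only [ADseg, Set.mem_prod, Set.mem_singleton_iff]

lemma ADseg_subset_Kzero {t : ℝ} (ht : t ∈ Set.Icc (0:ℝ) 1) : ADseg t ⊆ Kzero := by
  intro p hp
  rcases mem_ADseg.mp hp with ⟨h1, h2, h3⟩
  exact mem_Kzero.mpr (Or.inl ⟨h1 ▸ Set.mem_insert _ _, h2 ▸ ht, h3⟩)

lemma Kzero_x0 {p : ℝ × ℝ × ℝ} (hp : p ∈ Kzero) (h0 : p.1 = 0) : p ∈ ADseg p.2.1 :=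
  mem_ADseg.mpr ⟨h0, rfl, (Kzero_coords hp).2.2⟩

lemma isCompact_Kzero : IsCompact Kzero :=
  (isCompact_ADS.prod (isCompact_Icc.prod isCompact_Icc)).union
    (isCompact_Icc.prod (isCompact_Icc.prod isCompact_singleton))

lemma isConnected_Kzero : IsConnected Kzero := by
  have h000 : ((0:ℝ), (0:ℝ), (0:ℝ)) ∈ Kzero :=
    mem_Kzero.mpr (Or.inr ⟨⟨le_refl 0, zero_le_one⟩, ⟨le_refl 0, zero_le_one⟩, rfl⟩)
  refine ⟨⟨_, h000⟩, isPreconnected_of_forall ((0:ℝ), (0:ℝ), (0:ℝ)) ?_⟩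
  intro p hp
  have hbotc : Convex ℝ (Set.Icc (0:ℝ) 1 ×ˢ (Set.Icc (0:ℝ) 1 ×ˢ ({0}:Set ℝ))) :=
    (convex_Icc _ _).prod ((convex_Icc _ _).prod (convex_singleton _))
  have hbotK : Set.Icc (0:ℝ) 1 ×ˢ (Set.Icc (0:ℝ) 1 ×ˢ ({0}:Set ℝ)) ⊆ Kzero :=
    Set.subset_union_right
  have h0bot : ((0:ℝ), (0:ℝ), (0:ℝ)) ∈ Set.Icc (0:ℝ) 1 ×ˢ (Set.Icc (0:ℝ) 1 ×ˢ ({0}:Set ℝ)) :=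
    ⟨⟨le_refl 0, zero_le_one⟩, ⟨le_refl 0, zero_le_one⟩, rfl⟩
  rcases mem_Kzero.mp hp with ⟨h1, h2, h3⟩ | ⟨h1, h2, h3⟩
  · refine ⟨({p.1} : Set ℝ) ×ˢ (Set.Icc (0:ℝ) 1 ×ˢ Set.Icc (0:ℝ) 1) ∪
      Set.Icc (0:ℝ) 1 ×ˢ (Set.Icc (0:ℝ) 1 ×ˢ ({0}:Set ℝ)), ?_, ?_, ?_, ?_⟩
    · refine Set.union_subset ?_ hbotK
      rintro q ⟨hq1, hq2, hq3⟩
      exact mem_Kzero.mpr (Or.inl ⟨(Set.mem_singleton_iff.mp hq1) ▸ h1, hq2, hq3⟩)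
    · exact Or.inr h0bot
    · exact Or.inl ⟨rfl, h2, h3⟩
    · refine IsPreconnected.union (p.1, (0:ℝ), (0:ℝ)) ?_ ?_ ?_ ?_
      · exact ⟨rfl, ⟨le_refl 0, zero_le_one⟩, ⟨le_refl 0, zero_le_one⟩⟩
      · exact ⟨ADS_subset_Icc h1, ⟨le_refl 0, zero_le_one⟩, rfl⟩
      · exact ((convex_singleton _).prod ((convex_Icc _ _).prod (convex_Icc _ _))).isPreconnected
      · exact hbotc.isPreconnected
  · exact ⟨Set.Icc (0:ℝ) 1 ×ˢ (Set.Icc (0:ℝ) 1 ×ˢ ({0}:Set ℝ)), hbotK, h0bot,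
      ⟨h1, h2, h3⟩, hbotc.isPreconnected⟩

lemma mem_Done {δ : Set (ℝ × ℝ × ℝ)} :
    δ ∈ Done ↔ (∃ t ∈ Set.Icc (0:ℝ) 1, δ = ADseg t) ∨ ∃ p ∈ Kzero, 0 < p.1 ∧ δ = {p} :=
  Iff.rfl

lemma mem_ball3 {p q : ℝ × ℝ × ℝ} {r : ℝ} :
    p ∈ ball q r ↔ |p.1 - q.1| < r ∧ |p.2.1 - q.2.1| < r ∧ |p.2.2 - q.2.2| < r := by
  rw [mem_ball, Prod.dist_eq, Prod.dist_eq, max_lt_iff, max_lt_iff, Real.dist_eq,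
    Real.dist_eq, Real.dist_eq]

lemma AD_Done_subK : ∀ δ ∈ Done, δ ⊆ Kzero := by
  rintro δ (⟨t, ht, rfl⟩ | ⟨p, hp, hp1, rfl⟩)
  · exact ADseg_subset_Kzero ht
  · exact Set.singleton_subset_iff.mpr hp

lemma AD_usc : IsUSCDecompCont Kzero Done := by
  constructor
  · refine ⟨?_, ?_, ?_, ?_⟩
    · rintro δ (⟨t, ht, rfl⟩ | ⟨p, hp, hp1, rfl⟩)
      · refine ⟨⟨((0:ℝ), t, (0:ℝ)), mem_ADseg.mpr ⟨rfl, rfl, le_refl 0, zero_le_one⟩⟩, ?_, 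
          ADseg_subset_Kzero ht⟩
        exact isClosed_singleton.prod (isClosed_singleton.prod isClosed_Icc)
      · exact ⟨⟨p, rfl⟩, isClosed_singleton, Set.singleton_subset_iff.mpr hp⟩
    · rintro δ (⟨t, ht, rfl⟩ | ⟨p, hp, hp1, rfl⟩) δ' (⟨t', ht', rfl⟩ | ⟨p', hp', hp1', rfl⟩) hne
      · refine Set.disjoint_left.mpr fun a ha ha' => ?_
        rcases mem_ADseg.mp ha with ⟨-, h2, -⟩
        rcases mem_ADseg.mp ha' with ⟨-, h2', -⟩
        have htt : t = t' := by rw [← h2, h2']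
        exact hne (by rw [htt])
      · refine Set.disjoint_left.mpr fun a ha ha' => ?_
        rcases mem_ADseg.mp ha with ⟨h1, -, -⟩
        rw [Set.mem_singleton_iff] at ha'
        rw [← ha', h1] at hp1'
        exact lt_irrefl _ hp1'
      · refine Set.disjoint_left.mpr fun a ha ha' => ?_
        rcases mem_ADseg.mp ha' with ⟨h1, -, -⟩
        rw [Set.mem_singleton_iff] at ha
        rw [← ha, h1] at hp1
        exact lt_irrefl _ hp1
      · refine Set.disjoint_left.mpr fun a ha ha' => ?_
        rw [Set.mem_singleton_iff] at ha ha'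
        exact hne (by rw [← ha, ← ha'])
    · ext p
      constructor
      · rintro ⟨δ, hδ, hp⟩
        exact AD_Done_subK δ hδ hp
      · intro hp
        by_cases h0 : p.1 = 0
        · exact ⟨ADseg p.2.1, Or.inl ⟨p.2.1, (Kzero_coords hp).2.1, rfl⟩, Kzero_x0 hp h0⟩
        · exact ⟨{p}, Or.inr ⟨p, hp, lt_of_le_of_ne (Kzero_coords hp).1.1 (Ne.symm h0), rfl⟩, rfl⟩
    · rintro δ (⟨t, ht, rfl⟩ | ⟨p, hp, hp1, rfl⟩) U hUo hUsub
      · -- segment case: use a thickening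
        have hcomp : IsCompact (ADseg t) :=
          isCompact_singleton.prod (isCompact_singleton.prod isCompact_Icc)
        obtain ⟨ρ, hρ, hthick⟩ := hcomp.exists_thickening_subset_open hUo hUsub
        refine ⟨{δ'' ∈ Done | δ'' ⊆ thickening ρ (ADseg t)}, Set.sep_subset _ _,
          ⟨thickening ρ (ADseg t), isOpen_thickening, ?_⟩, ?_, ?_⟩
        · ext a
          constructor
          · rintro ⟨δ'', ⟨hd, hsub⟩, ha⟩
            exact ⟨hsub ha, AD_Done_subK δ'' hd ha⟩
          · rintro ⟨haW, haK⟩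
            by_cases h0 : a.1 = 0
            · refine ⟨ADseg a.2.1, ⟨Or.inl ⟨a.2.1, (Kzero_coords haK).2.1, rfl⟩, ?_⟩,
                Kzero_x0 haK h0⟩
              obtain ⟨z, hz, hdz⟩ := mem_thickening_iff.mp haW
              rcases mem_ADseg.mp hz with ⟨hz1, hz2, hz3⟩
              have hy : |a.2.1 - t| < ρ := by
                have := mem_ball3.mp (mem_ball.mpr hdz)
                rw [hz2] at this
                exact this.2.1
              intro b hb
              rcases mem_ADseg.mp hb with ⟨hb1, hb2, hb3⟩
              refine mem_thickening_iff.mpr ⟨((0:ℝ), t, b.2.2), 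
                mem_ADseg.mpr ⟨rfl, rfl, hb3⟩, ?_⟩
              rw [← mem_ball, mem_ball3]
              simp only [hb1, hb2]
              simpa [abs_of_nonneg, hρ] using hy
            · exact ⟨{a}, ⟨Or.inr ⟨a, haK, lt_of_le_of_ne (Kzero_coords haK).1.1 (Ne.symm h0), rfl⟩,
                Set.singleton_subset_iff.mpr haW⟩, rfl⟩
        · exact Set.subset_sUnion_of_mem ⟨Or.inl ⟨t, ht, rfl⟩, self_subset_thickening hρ _⟩
        · exact Set.sUnion_subset (fun δ'' hd => hd.2.trans hthick)
      · -- singleton case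
        refine ⟨{δ'' | ∃ q, ((q ∈ U ∧ 0 < q.1) ∧ q ∈ Kzero) ∧ δ'' = {q}},
          ?_, ⟨U ∩ {q : ℝ × ℝ × ℝ | 0 < q.1}, hUo.inter (isOpen_lt continuous_const continuous_fst),
          ?_⟩, ?_, ?_⟩
        · rintro δ'' ⟨q, ⟨⟨hqU, hq1⟩, hqK⟩, rfl⟩
          exact Or.inr ⟨q, hqK, hq1, rfl⟩
        · ext a
          constructor
          · rintro ⟨δ'', ⟨q, hq, rfl⟩, ha⟩
            rw [Set.mem_singleton_iff] at ha
            subst ha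
            exact ⟨⟨hq.1.1, hq.1.2⟩, hq.2⟩
          · rintro ⟨⟨haU, ha1⟩, haK⟩
            exact ⟨{a}, ⟨a, ⟨⟨haU, ha1⟩, haK⟩, rfl⟩, rfl⟩
        · intro b hb
          rw [Set.mem_singleton_iff] at hb
          subst hb
          exact ⟨{b}, ⟨b, ⟨⟨hUsub rfl, hp1⟩, hp⟩, rfl⟩, rfl⟩
        · rintro a ⟨δ'', ⟨q, hq, rfl⟩, ha⟩
          rw [Set.mem_singleton_iff] at ha
          subst ha
          exact hq.1.1
  · rintro δ (⟨t, ht, rfl⟩ | ⟨p, hp, hp1, rfl⟩)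
    · refine ((convex_singleton _).prod ((convex_singleton _).prod (convex_Icc _ _))).isConnected
        ⟨((0:ℝ), t, (0:ℝ)), mem_ADseg.mpr ⟨rfl, rfl, le_refl 0, zero_le_one⟩⟩
    · exact isConnected_singleton

/-! ### the quotient space of `Done` -/

def ADf : ℝ × ℝ × ℝ → ℝ × ℝ × ℝ := fun p => (p.1, p.2.1, p.1 * p.2.2)

def ADKone : Set (ℝ × ℝ × ℝ) := ADf '' Kzero

lemma AD_gap {n m : ℕ} (h : m ≠ n) :
    1 / (((n:ℝ)+1) * ((n:ℝ)+2)) ≤ |1 / ((m:ℝ)+1) - 1 / ((n:ℝ)+1)| := by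
  have hm : (0:ℝ) < (m:ℝ) + 1 := by positivity
  have hn : (0:ℝ) < (n:ℝ) + 1 := by positivity
  have key : 1 / ((m:ℝ)+1) - 1 / ((n:ℝ)+1) = ((n:ℝ) - (m:ℝ)) / (((m:ℝ)+1) * ((n:ℝ)+1)) := by
    rw [div_sub_div _ _ (ne_of_gt hm) (ne_of_gt hn)]
    congr 1
    ring
  rcases lt_or_gt_of_ne h with hlt | hgt
  · have hc : (m:ℝ) + 1 ≤ (n:ℝ) := by exact_mod_cast Nat.succ_le_of_lt hlt
    rw [abs_of_pos (by rw [key]; exact div_pos (by linarith) (by positivity))]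
    rw [key, div_le_div_iff₀ (by positivity) (by positivity)]
    nlinarith [mul_nonneg (mul_nonneg (show (0:ℝ) ≤ (n:ℝ)-(m:ℝ)-1 by linarith)
        (show (0:ℝ) ≤ (n:ℝ)+2 by positivity)) (show (0:ℝ) ≤ (n:ℝ)+1 by positivity),
      mul_nonneg (show (0:ℝ) ≤ (n:ℝ)-(m:ℝ)+1 by linarith)
        (show (0:ℝ) ≤ (n:ℝ)+1 by positivity)]
  · have hc : (n:ℝ) + 1 ≤ (m:ℝ) := by exact_mod_cast Nat.succ_le_of_lt hgt
    rw [abs_of_neg (by rw [key]; exact div_neg_of_neg_of_pos (by linarith) (by positivity))]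
    rw [key, ← neg_div, neg_sub, div_le_div_iff₀ (by positivity) (by positivity)]
    nlinarith [mul_nonneg (mul_nonneg (show (0:ℝ) ≤ (m:ℝ)-(n:ℝ)-1 by linarith)
        (show (0:ℝ) ≤ (n:ℝ)+1 by positivity)) (show (0:ℝ) ≤ (n:ℝ)+1 by positivity)]

lemma mem_ADKone {q : ℝ × ℝ × ℝ} :
    q ∈ ADKone ↔ (q.1 ∈ Set.Icc (0:ℝ) 1 ∧ q.2.1 ∈ Set.Icc (0:ℝ) 1 ∧ q.2.2 = 0) ∨
      (∃ n : ℕ, q.1 = 1 / ((n:ℝ)+1) ∧ q.2.1 ∈ Set.Icc (0:ℝ) 1 ∧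
        q.2.2 ∈ Set.Icc (0:ℝ) (1 / ((n:ℝ)+1))) := by
  constructor
  · rintro ⟨p, hp, rfl⟩
    rcases mem_Kzero.mp hp with ⟨h1, h2, h3⟩ | ⟨h1, h2, h3⟩
    · rcases ADS_cases h1 with h0 | ⟨n, hn⟩
      · exact Or.inl ⟨by rw [ADf, h0]; exact ⟨le_refl 0, zero_le_one⟩, h2,
          by show p.1 * p.2.2 = 0; rw [h0, zero_mul]⟩
      · refine Or.inr ⟨n, hn, h2, ?_, ?_⟩
        · have : (0:ℝ) ≤ p.1 := ADS_subset_Icc h1 |>.1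
          exact mul_nonneg this h3.1
        · rw [← hn]
          calc p.1 * p.2.2 ≤ p.1 * 1 := by
                refine mul_le_mul_of_nonneg_left h3.2 (ADS_subset_Icc h1).1
            _ = p.1 := mul_one _
    · exact Or.inl ⟨h1, h2, by show p.1 * p.2.2 = 0; rw [h3, mul_zero]⟩
  · rintro (⟨h1, h2, h3⟩ | ⟨n, h1, h2, h3⟩)
    · refine ⟨(q.1, q.2.1, (0:ℝ)), mem_Kzero.mpr (Or.inr ⟨h1, h2, rfl⟩), ?_⟩
      show (q.1, q.2.1, q.1 * 0) = q
      rw [mul_zero, ← h3]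
    · have hq1 : (0:ℝ) < q.1 := by rw [h1]; positivity
      refine ⟨(q.1, q.2.1, q.2.2 / q.1), mem_Kzero.mpr (Or.inl ⟨Or.inr ⟨n, h1⟩, h2, 
        div_nonneg h3.1 hq1.le, (div_le_one hq1).mpr (h3.2.trans_eq h1.symm)⟩), ?_⟩
      show (q.1, q.2.1, q.1 * (q.2.2 / q.1)) = q
      rw [mul_comm, div_mul_cancel₀ _ (ne_of_gt hq1)]

lemma ADKone_coords {q : ℝ × ℝ × ℝ} (hq : q ∈ ADKone) :
    q.1 ∈ Set.Icc (0:ℝ) 1 ∧ q.2.1 ∈ Set.Icc (0:ℝ) 1 := by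
  obtain ⟨p, hp, rfl⟩ := hq
  exact ⟨(Kzero_coords hp).1, (Kzero_coords hp).2.1⟩

set_option maxHeartbeats 1000000 in
lemma ball_inter_ADKone {q : ℝ × ℝ × ℝ} (hq : q ∈ ADKone) {ε : ℝ} (hε : 0 < ε) :
    ∃ ε' : ℝ, 0 < ε' ∧ ε' ≤ ε ∧ IsPreconnected (ball q ε' ∩ ADKone) := by
  by_cases hc : q.2.2 = 0
  · -- point on the bottom plane: any radius works
    refine ⟨ε, hε, le_refl ε, ?_⟩
    set R : Set (ℝ × ℝ × ℝ) :=
      (ball q.1 ε ∩ Set.Icc 0 1) ×ˢ ((ball q.2.1 ε ∩ Set.Icc 0 1) ×ˢ ({0} : Set ℝ)) with hRdef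
    have hRconv : Convex ℝ R :=
      ((convex_ball _ _).inter (convex_Icc _ _)).prod
        (((convex_ball _ _).inter (convex_Icc _ _)).prod (convex_singleton _))
    have hRsub : R ⊆ ball q ε ∩ ADKone := by
      rintro ⟨x, y, z⟩ ⟨hx, hy, hz⟩
      simp only [Set.mem_singleton_iff] at hz
      subst hz
      constructor
      · rw [mem_ball3]
        refine ⟨by have := mem_ball.mp hx.1; rwa [Real.dist_eq] at this,
          by have := mem_ball.mp hy.1; rwa [Real.dist_eq] at this, ?_⟩
        show |(0:ℝ) - q.2.2| < ε
        rw [hc]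
        simpa using hε
      · exact mem_ADKone.mpr (Or.inl ⟨hx.2, hy.2, rfl⟩)
    have hqR : q ∈ R := ⟨⟨mem_ball_self hε, (ADKone_coords hq).1⟩,
      ⟨mem_ball_self hε, (ADKone_coords hq).2⟩, hc⟩
    refine isPreconnected_of_forall q ?_
    intro y hy
    have hb3 := mem_ball3.mp hy.1
    rcases mem_ADKone.mp hy.2 with ⟨h1, h2, h3⟩ | ⟨m, h1, h2, h3⟩
    · refine ⟨R, hRsub, hqR, ?_, hRconv.isPreconnected⟩
      exact ⟨⟨mem_ball.mpr (by rw [Real.dist_eq]; exact hb3.1), h1⟩,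
        ⟨mem_ball.mpr (by rw [Real.dist_eq]; exact hb3.2.1), h2⟩, h3⟩
    · -- y on a square
      have hy1Icc : y.1 ∈ Set.Icc (0:ℝ) 1 := (ADKone_coords hy.2).1
      set P : Set (ℝ × ℝ × ℝ) := ({y.1} : Set ℝ) ×ˢ
        ((ball q.2.1 ε ∩ Set.Icc 0 1) ×ˢ (ball q.2.2 ε ∩ Set.Icc (0:ℝ) (1/((m:ℝ)+1)))) with hPdef
      have hPconv : Convex ℝ P :=
        (convex_singleton _).prod (((convex_ball _ _).inter (convex_Icc _ _)).prod
          ((convex_ball _ _).inter (convex_Icc _ _)))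
      have hPsub : P ⊆ ball q ε ∩ ADKone := by
        rintro ⟨x, y2, z⟩ ⟨hx, hy2, hz⟩
        simp only [Set.mem_singleton_iff] at hx
        subst hx
        constructor
        · rw [mem_ball3]
          exact ⟨hb3.1, by have := mem_ball.mp hy2.1; rwa [Real.dist_eq] at this,
            by have := mem_ball.mp hz.1; rwa [Real.dist_eq] at this⟩
        · exact mem_ADKone.mpr (Or.inr ⟨m, h1, hy2.2, hz.2⟩)
      have hmpos : (0:ℝ) < 1/((m:ℝ)+1) := by positivity
      have hw : ((y.1 : ℝ), (q.2.1 : ℝ), (0:ℝ)) ∈ R ∩ P := by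
        constructor
        · exact ⟨⟨mem_ball.mpr (by rw [Real.dist_eq]; exact hb3.1), hy1Icc⟩,
            ⟨mem_ball_self hε, (ADKone_coords hq).2⟩, rfl⟩
        · refine ⟨rfl, ⟨mem_ball_self hε, (ADKone_coords hq).2⟩, ?_, le_refl 0, hmpos.le⟩
          show (0:ℝ) ∈ ball q.2.2 ε
          rw [mem_ball, Real.dist_eq, hc]
          simpa using hε
      refine ⟨R ∪ P, Set.union_subset hRsub hPsub, Or.inl hqR, Or.inr ?_,
        IsPreconnected.union _ hw.1 hw.2 hRconv.isPreconnected hPconv.isPreconnected⟩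
      exact ⟨rfl, ⟨mem_ball.mpr (by rw [Real.dist_eq]; exact hb3.2.1), h2⟩,
        ⟨mem_ball.mpr (by rw [Real.dist_eq]; exact hb3.2.2), h3⟩⟩
  · -- point on a square, above the bottom plane
    obtain ⟨n, h1, h2, h3⟩ :=
      (mem_ADKone.mp hq).resolve_left (fun h => hc h.2.2)
    have hcpos : 0 < q.2.2 := lt_of_le_of_ne h3.1 (Ne.symm hc)
    have hgpos : (0:ℝ) < 1/(((n:ℝ)+1)*((n:ℝ)+2)) := by positivity
    set ε' := min ε (min (q.2.2/2) (1/(((n:ℝ)+1)*((n:ℝ)+2))/2)) with hε'def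
    have hε' : 0 < ε' := lt_min hε (lt_min (by positivity) (by positivity))
    refine ⟨ε', hε', min_le_left _ _, ?_⟩
    have heq : ball q ε' ∩ ADKone = ({q.1} : Set ℝ) ×ˢ
        ((ball q.2.1 ε' ∩ Set.Icc 0 1) ×ˢ (ball q.2.2 ε' ∩ Set.Icc (0:ℝ) q.1)) := by
      apply Set.Subset.antisymm
      · rintro y ⟨hyb, hyK⟩
        have hb3 := mem_ball3.mp hyb
        have hzpos : 0 < y.2.2 := by
          have habs := abs_lt.mp hb3.2.2
          have h2' : ε' ≤ q.2.2/2 := (min_le_right _ _).trans (min_le_left _ _)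
          linarith [habs.1]
        rcases mem_ADKone.mp hyK with ⟨-, -, hz0⟩ | ⟨m, g1, g2, g3⟩
        · rw [hz0] at hzpos
          exact absurd hzpos (lt_irrefl 0)
        · have hmn : m = n := by
            by_contra hne
            have hgap := AD_gap hne
            have hx := hb3.1
            rw [g1, h1] at hx
            have hle : ε' ≤ 1/(((n:ℝ)+1)*((n:ℝ)+2))/2 :=
              (min_le_right _ _).trans (min_le_right _ _)
            have := hgap.trans_lt (hx.trans_le hle)
            linarith
          subst hmn
          refine ⟨by rw [Set.mem_singleton_iff, g1, h1], 
            ⟨mem_ball.mpr (by rw [Real.dist_eq]; exact hb3.2.1), g2⟩,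
            ⟨mem_ball.mpr (by rw [Real.dist_eq]; exact hb3.2.2), by rw [h1]; exact g3⟩⟩
      · rintro ⟨x, y2, z⟩ ⟨hx, hy2, hz⟩
        simp only [Set.mem_singleton_iff] at hx
        subst hx
        constructor
        · rw [mem_ball3]
          refine ⟨by simpa using hε', 
            by have := mem_ball.mp hy2.1; rwa [Real.dist_eq] at this,
            by have := mem_ball.mp hz.1; rwa [Real.dist_eq] at this⟩
        · refine mem_ADKone.mpr (Or.inr ⟨n, h1, hy2.2, ?_⟩)
          rw [← h1]
          exact hz.2
    rw [heq]
    exact ((convex_singleton _).prod (((convex_ball _ _).inter (convex_Icc _ _)).prod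
      ((convex_ball _ _).inter (convex_Icc _ _)))).isPreconnected

lemma locallyConnected_ADKone : LocallyConnectedSpace ADKone := by
  rw [locallyConnectedSpace_iff_connected_subsets]
  intro x U hU
  obtain ⟨ε, hε, hball⟩ := Metric.mem_nhds_iff.mp hU
  obtain ⟨ε', h1, h2, h3⟩ := ball_inter_ADKone x.2 hε
  refine ⟨ball x ε', ball_mem_nhds x h1, ?_, (ball_subset_ball h2).trans hball⟩
  have hbeq : (ball x ε' : Set ↥ADKone) = Subtype.val ⁻¹' (ball (x : ℝ × ℝ × ℝ) ε') := by
    ext y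
    simp only [mem_ball, Set.mem_preimage, Subtype.dist_eq]
  rw [hbeq]
  refine IsInducing.subtypeVal.isPreconnected_image.mp ?_
  rw [Subtype.image_preimage_coe]
  rwa [Set.inter_comm]

/-! ### generic topological facts -/

lemma AD_homeo_locallyConnected {X Y : Type*} [TopologicalSpace X] [TopologicalSpace Y]
    (h : X ≃ₜ Y) [LocallyConnectedSpace X] : LocallyConnectedSpace Y :=
  h.symm.isOpenEmbedding.locallyConnectedSpace

lemma AD_component_locallyConnected {Q : Type*} [TopologicalSpace Q] [PreconnectedSpace Q]
    [LocallyConnectedSpace Q] (y : Q) : LocallyConnectedSpace (connectedComponent y) := by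
  rw [PreconnectedSpace.connectedComponent_eq_univ]
  exact AD_homeo_locallyConnected (Homeomorph.Set.univ Q).symm

lemma AD_locallyConnected_of_component {Q : Type*} [TopologicalSpace Q] [PreconnectedSpace Q]
    (y : Q) (h : LocallyConnectedSpace (connectedComponent y)) : LocallyConnectedSpace Q := by
  rw [PreconnectedSpace.connectedComponent_eq_univ] at h
  exact @AD_homeo_locallyConnected _ _ _ _ (Homeomorph.Set.univ Q) h

/-- A connected compact metrizable locally connected space is a Peano compactum. -/
lemma AD_peano_of {Q : Type*} [TopologicalSpace Q] [CompactSpace Q] [ConnectedSpace Q]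
    [LocallyConnectedSpace Q] [TopologicalSpace.MetrizableSpace Q] :
    IsPeanoCompactumSp Q := by
  refine ⟨inferInstance, fun y => AD_component_locallyConnected y, ?_⟩
  obtain ⟨m, hm⟩ : ∃ m : MetricSpace Q, m.toPseudoMetricSpace.toUniformSpace.toTopologicalSpace =
      ‹TopologicalSpace Q› := ⟨TopologicalSpace.metrizableSpaceMetric Q, rfl⟩
  refine ⟨m, hm, fun ε hε => ?_⟩
  refine Set.Finite.subset (Set.finite_singleton (Set.univ : Set Q)) ?_
  rintro C ⟨⟨y, rfl⟩, -⟩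
  simp [PreconnectedSpace.connectedComponent_eq_univ]

/-- the relation of a decomposition whose elements cover `K` and are pairwise disjoint is
an equivalence relation. -/
lemma AD_rel_equiv {X : Type*} {K : Set X} {D : Set (Set X)}
    (hcover : ⋃₀ D = K)
    (hdisj : ∀ δ ∈ D, ∀ δ' ∈ D, δ ≠ δ' → Disjoint δ δ') :
    Equivalence (decompRel K D) := by
  constructor
  · intro x
    have hx : (x : X) ∈ ⋃₀ D := hcover.symm ▸ x.2
    obtain ⟨δ, hδ, hxδ⟩ := hx
    exact ⟨δ, hδ, hxδ, hxδ⟩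
  · rintro x y ⟨δ, hδ, hx, hy⟩
    exact ⟨δ, hδ, hy, hx⟩
  · rintro x y z ⟨δ, hδ, hx, hy⟩ ⟨δ', hδ', hy', hz⟩
    have hdd : δ = δ' := by
      by_contra hne
      exact Set.disjoint_left.mp (hdisj δ hδ δ' hδ' hne) hy hy'
    exact ⟨δ, hδ, hx, hdd ▸ hz⟩

lemma AD_mk_eq_iff {X : Type*} [TopologicalSpace X] {K : Set X} {D : Set (Set X)}
    (hcover : ⋃₀ D = K)
    (hdisj : ∀ δ ∈ D, ∀ δ' ∈ D, δ ≠ δ' → Disjoint δ δ') {x y : K} :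
    (Quot.mk (decompRel K D) x = Quot.mk (decompRel K D) y) ↔ decompRel K D x y :=
  ⟨fun h => ((AD_rel_equiv hcover hdisj).eqvGen_iff).mp (Quot.eqvGen_exact h), Quot.sound⟩

/-- preimages of open preconnected sets under a monotone decomposition map are preconnected. -/
lemma AD_sat_preimage_preconnected {X : Type*} [TopologicalSpace X] {K : Set X}
    {D : Set (Set X)} (hcover : ⋃₀ D = K)
    (hdisj : ∀ δ ∈ D, ∀ δ' ∈ D, δ ≠ δ' → Disjoint δ δ')
    (hconn : ∀ δ ∈ D, IsPreconnected δ) (hsubK : ∀ δ ∈ D, δ ⊆ K)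
    {N : Set (DecompQuot K D)} (hN : IsPreconnected N) (hNo : IsOpen N) :
    IsPreconnected (Quot.mk (decompRel K D) ⁻¹' N) := by
  set π : K → DecompQuot K D := Quot.mk (decompRel K D) with hπdef
  intro u v hu hv hcov hnu hnv
  by_contra hne
  rw [Set.not_nonempty_iff_eq_empty] at hne
  -- saturation: if one point of an element is on one side, the whole element is
  have key : ∀ (o o' : Set K), IsOpen o → IsOpen o' → (π ⁻¹' N ∩ (o ∩ o') = ∅) →
      (π ⁻¹' N ⊆ o ∪ o') → ∀ x y : K, π x = π y → x ∈ π ⁻¹' N ∩ o → y ∈ π ⁻¹' N ∩ o := by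
    rintro o o' ho ho' hoo' hsub x y hxy ⟨hxN, hxu⟩
    have hyN : y ∈ π ⁻¹' N := by
      rw [Set.mem_preimage, ← hxy]
      exact hxN
    obtain ⟨δ, hδ, hxδ, hyδ⟩ := (AD_mk_eq_iff hcover hdisj).mp hxy
    have hspre : IsPreconnected (Subtype.val ⁻¹' δ : Set K) := by
      refine IsInducing.subtypeVal.isPreconnected_image.mp ?_
      have him : (Subtype.val '' (Subtype.val ⁻¹' δ : Set K)) = δ := by
        rw [Subtype.image_preimage_coe, Set.inter_eq_self_of_subset_right (hsubK δ hδ)]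
      rw [him]
      exact hconn δ hδ
    have hsN : (Subtype.val ⁻¹' δ : Set K) ⊆ π ⁻¹' N := by
      intro w hw
      rw [Set.mem_preimage]
      have hww : π w = π x := Quot.sound ⟨δ, hδ, hw, hxδ⟩
      rw [hww]
      exact hxN
    by_cases hyu : y ∈ o
    · exact ⟨hyN, hyu⟩
    · have hyv : y ∈ o' := ((hsub (hsN hyδ)).resolve_left hyu)
      obtain ⟨w, hws, hwuv⟩ := hspre o o' ho ho' (fun w hw => hsub (hsN hw))
        ⟨x, hxδ, hxu⟩ ⟨y, hyδ, hyv⟩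
      exact absurd hoo' (Set.nonempty_iff_ne_empty.mp ⟨w, hsN hws, hwuv⟩)
  have keyu := key u v hu hv hne hcov
  have keyv := key v u hv hu (by rw [Set.inter_comm u v] at hne; exact hne)
    (fun w hw => (hcov hw).symm)
  -- images of the two sides
  have hsat : ∀ (o : Set K), (∀ x y : K, π x = π y → x ∈ π ⁻¹' N ∩ o → y ∈ π ⁻¹' N ∩ o) →
      π ⁻¹' (π '' (π ⁻¹' N ∩ o)) = π ⁻¹' N ∩ o := by
    intro o ko
    ext w
    constructor
    · rintro ⟨x, hxA, hxw⟩
      exact ko x w hxw hxA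
    · intro hw
      exact ⟨w, hw, rfl⟩
  have hAopen : IsOpen (π '' (π ⁻¹' N ∩ u)) := by
    rw [← isQuotientMap_quot_mk.isOpen_preimage]
    rw [hsat u keyu]
    exact (hNo.preimage continuous_quot_mk).inter hu
  have hBopen : IsOpen (π '' (π ⁻¹' N ∩ v)) := by
    rw [← isQuotientMap_quot_mk.isOpen_preimage]
    rw [hsat v keyv]
    exact (hNo.preimage continuous_quot_mk).inter hv
  obtain ⟨a, haN, hau⟩ := hnu
  obtain ⟨b, hbN, hbv⟩ := hnv
  obtain ⟨q, hqN, hqA, hqB⟩ := hN (π '' (π ⁻¹' N ∩ u)) (π '' (π ⁻¹' N ∩ v)) hAopen hBopen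
    (by
      intro q hq
      obtain ⟨w, rfl⟩ := Quot.exists_rep q
      have hwN : w ∈ π ⁻¹' N := hq
      rcases hcov hwN with hwu | hwv
      · exact Or.inl ⟨w, ⟨hwN, hwu⟩, rfl⟩
      · exact Or.inr ⟨w, ⟨hwN, hwv⟩, rfl⟩)
    ⟨π a, haN, ⟨a, ⟨haN, hau⟩, rfl⟩⟩ ⟨π b, hbN, ⟨b, ⟨hbN, hbv⟩, rfl⟩⟩
  obtain ⟨x, hxA, hxq⟩ := hqA
  obtain ⟨y, hyB, hyq⟩ := hqB
  have hyA := keyu x y (by rw [hxq, hyq]) hxA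
  exact absurd hne (Set.nonempty_iff_ne_empty.mp
    ⟨y, hyA.1, hyA.2, hyB.2⟩)

/-! ### the core rigidity lemma -/

lemma AD_core {D : Set (Set (ℝ × ℝ × ℝ))} (hD : IsPeanoDecomp Kzero D)
    {δ : Set (ℝ × ℝ × ℝ)} (hδ : δ ∈ D) {t z₀ u v : ℝ}
    (hδs : δ ⊆ ADseg t) (hz₀ : ((0:ℝ), t, z₀) ∈ δ)
    (hu : 0 < u) (huv : u < v) (hvz : v < z₀)
    (hgap : ∀ z ∈ Set.Icc u v, ((0:ℝ), t, z) ∉ δ) : False := by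
  obtain ⟨⟨⟨hne, hdisj, hcover, -⟩, hconn⟩, hcomp, hloc, m, hm, -⟩ := hD
  have hδK : δ ⊆ Kzero := (hne δ hδ).2.2
  have hz₀K : ((0:ℝ), t, z₀) ∈ Kzero := hδK hz₀
  have htI : t ∈ Set.Icc (0:ℝ) 1 := (Kzero_coords hz₀K).2.1
  have hzI : z₀ ∈ Set.Icc (0:ℝ) 1 := (Kzero_coords hz₀K).2.2
  set ρ := (v - u)/4 with hρdef
  have hρ : 0 < ρ := by simp only [hρdef]; linarith
  set u' := u + ρ with hu'def
  set v' := v - ρ with hv'def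
  have hu'v' : u' < v' := by simp only [hu'def, hv'def, hρdef]; linarith
  have hv'pos : 0 < v' := by simp only [hv'def, hρdef]; linarith
  have hv'z : v' < z₀ := by simp only [hv'def]; linarith
  set U : Set (ℝ × ℝ × ℝ) := ⋃ p ∈ δ, ball p ρ with hUdef
  have hUo : IsOpen U := isOpen_biUnion (fun p _ => isOpen_ball)
  have hδU : δ ⊆ U := fun p hp => Set.mem_biUnion hp (mem_ball_self hρ)
  have hUz : ∀ q ∈ U, q.2.2 < u' ∨ v' < q.2.2 := by
    intro q hq
    obtain ⟨p, hp, hqp⟩ := Set.mem_iUnion₂.mp hq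
    obtain ⟨hp1, hp2, hp3⟩ := mem_ADseg.mp (hδs hp)
    have hpform : p = ((0:ℝ), t, p.2.2) := Prod.ext hp1 (Prod.ext hp2 rfl)
    have hpnot : p.2.2 ∉ Set.Icc u v := fun hmem => hgap p.2.2 hmem (hpform ▸ hp)
    have habs : |q.2.2 - p.2.2| < ρ := (mem_ball3.mp hqp).2.2
    have habs' := abs_lt.mp habs
    rcases not_and_or.mp (fun h => hpnot ⟨h.1, h.2⟩) with h | h
    · left
      push_neg at h
      simp only [u', hρdef]
      simp only [hρdef] at habs'
      linarith
    · right
      push_neg at h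
      simp only [v', hρdef]
      simp only [hρdef] at habs'
      linarith
  -- quotient space setup
  haveI hKc : CompactSpace ↥Kzero := isCompact_iff_compactSpace.mp isCompact_Kzero
  haveI hKconn : ConnectedSpace ↥Kzero := Subtype.connectedSpace isConnected_Kzero
  haveI : ConnectedSpace (DecompQuot Kzero D) :=
    Quot.mk_surjective.connectedSpace continuous_quot_mk
  haveI : TopologicalSpace.MetrizableSpace (DecompQuot Kzero D) := by
    rw [← hm]; exact @EMetricSpace.metrizableSpace _ m.toEMetricSpace
  haveI : LocallyConnectedSpace (DecompQuot Kzero D) :=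
    AD_locallyConnected_of_component (Classical.arbitrary _) (hloc _)
  set π : ↥Kzero → DecompQuot Kzero D := Quot.mk (decompRel Kzero D) with hπdef
  set x₀ : ↥Kzero := ⟨((0:ℝ), t, z₀), hz₀K⟩ with hx₀def
  set C : Set ↥Kzero := Subtype.val ⁻¹' Uᶜ with hCdef
  have hCcl : IsClosed C := hUo.isClosed_compl.preimage continuous_subtype_val
  have hFcl : IsClosed (π '' C) := (hCcl.isCompact.image continuous_quot_mk).isClosed
  have hq₀F : π x₀ ∉ π '' C := by
    rintro ⟨x, hxC, hxq⟩
    obtain ⟨δ', hδ', hx', hx₀'⟩ := (AD_mk_eq_iff hcover hdisj).mp hxq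
    have hδδ : δ' = δ := by
      by_contra hne'
      exact Set.disjoint_left.mp (hdisj δ' hδ' δ hδ hne') hx₀' hz₀
    rw [hδδ] at hx'
    exact hxC (hδU hx')
  obtain ⟨N, hNsub, hNopen, hNmem, hNconn⟩ :=
    locallyConnectedSpace_iff_subsets_isOpen_isConnected.mp ‹_› (π x₀) (π '' C)ᶜ
      (hFcl.isOpen_compl.mem_nhds hq₀F)
  set Vsub : Set ↥Kzero := π ⁻¹' N with hVdef
  have hVo : IsOpen Vsub := hNopen.preimage continuous_quot_mk
  have hx₀V : x₀ ∈ Vsub := hNmem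
  have hVpre : IsPreconnected Vsub :=
    AD_sat_preimage_preconnected hcover hdisj (fun δ' h' => (hconn δ' h').2)
      (fun δ' h' => (hne δ' h').2.2) hNconn.2 hNopen
  have hVU : ∀ x ∈ Vsub, (x : ℝ × ℝ × ℝ) ∈ U := by
    intro x hx
    by_contra hxU
    exact (hNsub hx) ⟨x, hxU, rfl⟩
  -- find a point on a nearby square inside V
  have hseqmem : ∀ n : ℕ, ((1/((n:ℝ)+1), t, z₀) : ℝ × ℝ × ℝ) ∈ Kzero :=
    fun n => mem_Kzero.mpr (Or.inl ⟨Or.inr ⟨n, rfl⟩, htI, hzI⟩)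
  set seq : ℕ → ↥Kzero := fun n => ⟨(1/((n:ℝ)+1), t, z₀), hseqmem n⟩ with hseqdef
  have hst : Tendsto seq atTop (𝓝 x₀) := by
    rw [tendsto_subtype_rng]
    exact tendsto_one_div_add_atTop_nhds_zero_nat.prodMk_nhds tendsto_const_nhds
  obtain ⟨n, hn⟩ := (hst.eventually (hVo.mem_nhds hx₀V)).exists
  -- final separation argument
  have hn1 : (0:ℝ) < 1/((n:ℝ)+1) := by positivity
  have hn2 : (0:ℝ) < 1/((n:ℝ)+2) := by positivity
  have hn12 : 1/((n:ℝ)+2) < 1/((n:ℝ)+1) :=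
    one_div_lt_one_div_of_lt (by positivity) (by linarith)
  have hVimg : IsPreconnected (Subtype.val '' Vsub) :=
    hVpre.image _ continuous_subtype_val.continuousOn
  have hA : IsOpen ({p : ℝ × ℝ × ℝ | v' < p.2.2} ∩ {p : ℝ × ℝ × ℝ | p.1 < 1/((n:ℝ)+1)}) :=
    (isOpen_lt continuous_const (by fun_prop)).inter (isOpen_lt (by fun_prop) continuous_const)
  have hB : IsOpen ({p : ℝ × ℝ × ℝ | p.2.2 < u'} ∪ {p : ℝ × ℝ × ℝ | 1/((n:ℝ)+2) < p.1}) :=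
    (isOpen_lt (by fun_prop) continuous_const).union (isOpen_lt continuous_const (by fun_prop))
  obtain ⟨q, hqV, ⟨hq1, hq2⟩, hq3⟩ := hVimg _ _ hA hB
    (by
      rintro q ⟨x, hx, rfl⟩
      rcases hUz _ (hVU x hx) with h | h
      · exact Or.inr (Or.inl h)
      · have hzne : (↑x : ℝ × ℝ × ℝ).2.2 ≠ 0 := by
          intro h0
          rw [h0] at h
          exact absurd (hv'pos.trans h) (lt_irrefl 0)
        rcases ADS_cases (Kzero_zpos x.2 hzne) with h0 | ⟨mm, hmm⟩
        · exact Or.inl ⟨h, by simp only [Set.mem_setOf_eq]; rw [h0]; exact hn1⟩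
        · by_cases hlt : (↑x : ℝ × ℝ × ℝ).1 < 1/((n:ℝ)+1)
          · exact Or.inl ⟨h, hlt⟩
          · refine Or.inr (Or.inr ?_)
            push_neg at hlt
            exact hn12.trans_le hlt)
    ⟨((0:ℝ), t, z₀), ⟨x₀, hx₀V, rfl⟩, hv'z, hn1⟩
    ⟨(1/((n:ℝ)+1), t, z₀), ⟨seq n, hn, rfl⟩, Or.inr hn12⟩
  obtain ⟨x, hx, rfl⟩ := hqV
  simp only [Set.mem_setOf_eq] at hq1 hq2
  rcases hq3 with h | h
  all_goals simp only [Set.mem_setOf_eq] at h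
  · exact absurd ((h.trans hu'v').trans hq1) (lt_irrefl _)
  · have hzne : (↑x : ℝ × ℝ × ℝ).2.2 ≠ 0 := by
      intro h0
      rw [h0] at hq1
      exact absurd (hv'pos.trans hq1) (lt_irrefl 0)
    rcases ADS_cases (Kzero_zpos x.2 hzne) with h0 | ⟨mm, hmm⟩
    · rw [h0] at h
      exact absurd (hn2.trans h) (lt_irrefl 0)
    · rw [hmm] at h hq2
      have hnm : (n:ℝ) < (mm:ℝ) := by
        by_contra hle
        push_neg at hle
        have : 1/((n:ℝ)+1) ≤ 1/((mm:ℝ)+1) :=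
          one_div_le_one_div_of_le (by positivity) (by linarith)
        linarith
      have hnm' : (n:ℕ) < mm := by exact_mod_cast hnm
      have : 1/((mm:ℝ)+1) ≤ 1/((n:ℝ)+2) := by
        apply one_div_le_one_div_of_le (by positivity)
        have : ((n:ℝ)+1) ≤ (mm:ℝ) := by exact_mod_cast Nat.succ_le_of_lt hnm'
        linarith
      linarith

lemma AD_split {D : Set (Set (ℝ × ℝ × ℝ))} (hD : IsPeanoDecomp Kzero D)
    (hre : Refines D Done) {δ : Set (ℝ × ℝ × ℝ)} (hδ : δ ∈ D) {t : ℝ}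
    (ht : t ∈ Set.Icc (0:ℝ) 1) (hsub : δ ⊆ ADseg t) : δ = ADseg t := by
  by_contra hne'
  have hUSC := hD.1.1
  obtain ⟨hne, hdisj, hcover, -⟩ := hUSC
  -- a closed set containing `(0, b)` contains `0`
  have hclosure : ∀ (W : Set ℝ), IsClosed W → ∀ b : ℝ, 0 < b →
      (∀ w, 0 < w → w < b → w ∈ W) → (0:ℝ) ∈ W := by
    intro W hW b hb hsubW
    have h1 : Set.Ioo (0:ℝ) b ⊆ W := fun w hw => hsubW w hw.1 hw.2
    have h2 : (0:ℝ) ∈ closure (Set.Ioo (0:ℝ) b) := by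
      rw [closure_Ioo hb.ne]
      exact ⟨le_refl 0, hb.le⟩
    exact hW.closure_subset ((closure_mono h1) h2)
  -- key reduction to `AD_core`
  have key : ∀ δ' ∈ D, δ' ⊆ ADseg t → ∀ z₀ w : ℝ, ((0:ℝ), t, z₀) ∈ δ' → 0 < w → w < z₀ →
      ((0:ℝ), t, w) ∉ δ' → False := by
    intro δ' hδ' hsub' z₀ w hz₀ hw hwz hwδ
    have hZcl : IsClosed {z : ℝ | ((0:ℝ), t, z) ∈ δ'} :=
      (hne δ' hδ').2.1.preimage (by fun_prop : Continuous fun z : ℝ => ((0:ℝ), t, z))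
    obtain ⟨r, hr, hball⟩ := Metric.isOpen_iff.mp hZcl.isOpen_compl w hwδ
    set e := min (min (w/2) ((z₀-w)/2)) (r/2) with hedef
    have he : 0 < e := lt_min (lt_min (by linarith) (by linarith)) (by linarith)
    have he1 : e ≤ w/2 := (min_le_left _ _).trans (min_le_left _ _)
    have he2 : e ≤ (z₀-w)/2 := (min_le_left _ _).trans (min_le_right _ _)
    have he3 : e ≤ r/2 := min_le_right _ _
    refine AD_core hD hδ' hsub' hz₀ (u := w - e) (v := w + e)
      (by linarith) (by linarith) (by linarith) ?_
    intro z hz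
    have : z ∈ ball w r := by
      rw [mem_ball, Real.dist_eq]
      have := abs_le.mpr (⟨by linarith [hz.1], by linarith [hz.2]⟩ : -e ≤ z - w ∧ z - w ≤ e)
      linarith
    exact hball this
  -- structure of the trace of δ on the segment
  set Z : Set ℝ := {z : ℝ | ((0:ℝ), t, z) ∈ δ} with hZdef
  have hZsub : Z ⊆ Set.Icc (0:ℝ) 1 := fun z hz => (mem_ADseg.mp (hsub hz)).2.2
  have hZne : Z.Nonempty := by
    obtain ⟨p, hp⟩ := (hne δ hδ).1
    obtain ⟨h1, h2, -⟩ := mem_ADseg.mp (hsub hp)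
    have hpe : p = ((0:ℝ), t, p.2.2) := Prod.ext h1 (Prod.ext h2 rfl)
    exact ⟨p.2.2, show ((0:ℝ), t, p.2.2) ∈ δ from hpe ▸ hp⟩
  have hzstar : ∃ z', z' ∈ Set.Icc (0:ℝ) 1 ∧ z' ∉ Z := by
    by_contra hall
    push_neg at hall
    apply hne'
    apply Set.Subset.antisymm hsub
    intro p hp
    obtain ⟨h1, h2, h3⟩ := mem_ADseg.mp hp
    have hmem := hall p.2.2 h3
    have hpe : p = ((0:ℝ), t, p.2.2) := Prod.ext h1 (Prod.ext h2 rfl)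
    rw [hpe]
    exact hmem
  obtain ⟨z', hz'I, hz'Z⟩ := hzstar
  by_cases hcase : ∃ z₀ ∈ Z, ∃ w, 0 < w ∧ w < z₀ ∧ w ∉ Z
  · obtain ⟨z₀, hz₀, w, hw, hwz, hwZ⟩ := hcase
    exact key δ hδ hsub z₀ w hz₀ hw hwz hwZ
  · push_neg at hcase
    -- the element of `D` containing `(0, t, z')`
    have hz'K : ((0:ℝ), t, z') ∈ Kzero := ADseg_subset_Kzero ht (mem_ADseg.mpr ⟨rfl, rfl, hz'I⟩)
    have hz'mem : ((0:ℝ), t, z') ∈ ⋃₀ D := hcover.symm ▸ hz'K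
    obtain ⟨δs, hδs, hzδs⟩ := hz'mem
    have hsubs : δs ⊆ ADseg t := by
      obtain ⟨δ'', hδ'', hsub''⟩ := hre δs hδs
      rcases hδ'' with ⟨t'', ht'', rfl⟩ | ⟨p, hp, hp1, rfl⟩
      · have htt : t = t'' := (mem_ADseg.mp (hsub'' hzδs)).2.1
        rw [← htt] at hsub''
        exact hsub''
      · have hpe : ((0:ℝ), t, z') = p := hsub'' hzδs
        rw [← hpe] at hp1
        exact absurd hp1 (lt_irrefl 0)
    set Zs : Set ℝ := {z : ℝ | ((0:ℝ), t, z) ∈ δs} with hZsdef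
    have hZscl : IsClosed Zs :=
      (hne δs hδs).2.1.preimage (by fun_prop : Continuous fun z : ℝ => ((0:ℝ), t, z))
    by_cases hcase2 : ∃ z₀ ∈ Zs, ∃ w, 0 < w ∧ w < z₀ ∧ w ∉ Zs
    · obtain ⟨z₀, hz₀, w, hw, hwz, hwZ⟩ := hcase2
      exact key δs hδs hsubs z₀ w hz₀ hw hwz hwZ
    · push_neg at hcase2
      have hdd : δ ≠ δs := fun h => hz'Z (show ((0:ℝ), t, z') ∈ δ from h ▸ hzδs)
      have hdisj' := hdisj δ hδ δs hδs hdd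
      obtain ⟨ζ, hζ⟩ := hZne
      by_cases hζ0 : ζ = 0
      · have hz'pos : 0 < z' := by
          refine lt_of_le_of_ne hz'I.1 (fun h => hz'Z (show ((0:ℝ), t, z') ∈ δ from ?_))
          rw [← h]
          rw [hζ0] at hζ
          exact hζ
        have h0Zs : (0:ℝ) ∈ Zs :=
          hclosure Zs hZscl z' hz'pos (fun w hw hwz => hcase2 z' hzδs w hw hwz)
        refine Set.disjoint_left.mp hdisj' ?_ h0Zs
        rw [hζ0] at hζ
        exact hζ
      · have hζpos : 0 < ζ := lt_of_le_of_ne (hZsub hζ).1 (Ne.symm hζ0)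
        rcases lt_trichotomy ζ z' with hlt | heq | hgt
        · exact Set.disjoint_left.mp hdisj' hζ (hcase2 z' hzδs ζ hζpos hlt)
        · exact hz'Z (heq ▸ hζ)
        · by_cases hz'0 : z' = 0
          · have h0Z : (0:ℝ) ∈ Z :=
              hclosure Z ((hne δ hδ).2.1.preimage
                (by fun_prop : Continuous fun z : ℝ => ((0:ℝ), t, z))) ζ hζpos
                (fun w hw hwz => hcase ζ hζ w hw hwz)
            exact hz'Z (hz'0 ▸ h0Z)
          · have hz'pos : 0 < z' := lt_of_le_of_ne hz'I.1 (Ne.symm hz'0)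
            exact hz'Z (hcase ζ hζ z' hz'pos hgt)

lemma ADf_continuous : Continuous ADf := by
  unfold ADf
  fun_prop

lemma ADf_respects : ∀ a b : ↥Kzero, decompRel Kzero Done a b → ADf ↑a = ADf ↑b := by
  rintro a b ⟨δ, hδ, ha, hb⟩
  rcases hδ with ⟨t, ht, rfl⟩ | ⟨p, hp, hp1, rfl⟩
  · rcases mem_ADseg.mp ha with ⟨a1, a2, -⟩
    rcases mem_ADseg.mp hb with ⟨b1, b2, -⟩
    show ((↑a : ℝ × ℝ × ℝ).1, (↑a : ℝ × ℝ × ℝ).2.1, (↑a : ℝ × ℝ × ℝ).1 * (↑a : ℝ × ℝ × ℝ).2.2)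
      = ((↑b : ℝ × ℝ × ℝ).1, (↑b : ℝ × ℝ × ℝ).2.1, (↑b : ℝ × ℝ × ℝ).1 * (↑b : ℝ × ℝ × ℝ).2.2)
    rw [a1, b1, a2, b2, zero_mul, zero_mul]
  · rw [Set.mem_singleton_iff] at ha hb
    rw [ha, hb]

lemma AD_peano_quotient : IsPeanoCompactumSp (DecompQuot Kzero Done) := by
  haveI hKc : CompactSpace ↥Kzero := isCompact_iff_compactSpace.mp isCompact_Kzero
  haveI hKconn : ConnectedSpace ↥Kzero := Subtype.connectedSpace isConnected_Kzero
  haveI : ConnectedSpace (DecompQuot Kzero Done) :=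
    Quot.mk_surjective.connectedSpace continuous_quot_mk
  have hresp : ∀ a b : ↥Kzero, decompRel Kzero Done a b →
      (⟨ADf ↑a, Set.mem_image_of_mem _ a.2⟩ : ↥ADKone) = ⟨ADf ↑b, Set.mem_image_of_mem _ b.2⟩ :=
    fun a b hab => Subtype.ext (ADf_respects a b hab)
  set g : DecompQuot Kzero Done → ↥ADKone :=
    Quot.lift (fun x : ↥Kzero => (⟨ADf ↑x, Set.mem_image_of_mem _ x.2⟩ : ↥ADKone)) hresp with hg
  have hgc : Continuous g :=
    continuous_quot_lift _ ((ADf_continuous.comp continuous_subtype_val).subtype_mk _)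
  have hginj : Function.Injective g := by
    intro x y
    obtain ⟨a, rfl⟩ := Quot.exists_rep x
    obtain ⟨b, rfl⟩ := Quot.exists_rep y
    intro hab
    apply Quot.sound
    rw [hg] at hab
    have hf : ADf ↑a = ADf ↑b := congrArg Subtype.val hab
    have h1 := congrArg (fun p : ℝ × ℝ × ℝ => p.1) hf
    have h2 := congrArg (fun p : ℝ × ℝ × ℝ => p.2.1) hf
    have h3 := congrArg (fun p : ℝ × ℝ × ℝ => p.2.2) hf
    simp only [ADf] at h1 h2 h3
    by_cases h0 : (↑a : ℝ × ℝ × ℝ).1 = 0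
    · refine ⟨ADseg (↑a : ℝ × ℝ × ℝ).2.1, Or.inl ⟨(↑a : ℝ × ℝ × ℝ).2.1,
        (Kzero_coords a.2).2.1, rfl⟩, Kzero_x0 a.2 h0, ?_⟩
      have hb0 : (↑b : ℝ × ℝ × ℝ).1 = 0 := by rw [← h1]; exact h0
      have hbs := Kzero_x0 b.2 hb0
      rw [h2]
      exact hbs
    · have hpos : 0 < (↑a : ℝ × ℝ × ℝ).1 :=
        lt_of_le_of_ne (Kzero_coords a.2).1.1 (Ne.symm h0)
      rw [h1] at h3
      have hb0 : (↑b : ℝ × ℝ × ℝ).1 ≠ 0 := by rw [← h1]; exact h0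
      have hz : (↑a : ℝ × ℝ × ℝ).2.2 = (↑b : ℝ × ℝ × ℝ).2.2 := mul_left_cancel₀ hb0 h3
      have hab' : (↑a : ℝ × ℝ × ℝ) = (↑b : ℝ × ℝ × ℝ) := Prod.ext h1 (Prod.ext h2 hz)
      exact ⟨{(↑a : ℝ × ℝ × ℝ)}, Or.inr ⟨↑a, a.2, hpos, rfl⟩, rfl, by rw [hab']; exact rfl⟩
  have hgsurj : Function.Surjective g := by
    rintro ⟨w, p, hp, rfl⟩
    exact ⟨Quot.mk _ ⟨p, hp⟩, rfl⟩
  let e : DecompQuot Kzero Done ≃ ↥ADKone := Equiv.ofBijective g ⟨hginj, hgsurj⟩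
  let hhomeo : DecompQuot Kzero Done ≃ₜ ↥ADKone :=
    Continuous.homeoOfEquivCompactToT2 (f := e) hgc
  haveI := locallyConnected_ADKone
  haveI : LocallyConnectedSpace (DecompQuot Kzero Done) :=
    AD_homeo_locallyConnected hhomeo.symm
  haveI : TopologicalSpace.MetrizableSpace (DecompQuot Kzero Done) :=
    hhomeo.isEmbedding.metrizableSpace
  exact AD_peano_of

end ADhelp

/-- `D₁` is an atomic decomposition of `K₀` with Peano quotient: it is a
Peano decomposition of `K₀`, and no Peano decomposition of `K₀` other than `D₁` itself
refines `D₁`. -/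
theorem Done_isAtomicDecomposition :
    IsPeanoDecomp Kzero Done ∧
      ∀ D : Set (Set (ℝ × ℝ × ℝ)), IsPeanoDecomp Kzero D → Refines D Done → D = Done := by
  refine ⟨⟨AD_usc, AD_peano_quotient⟩, ?_⟩
  intro D hD hre
  have hne := hD.1.1.1
  have hcover := hD.1.1.2.2.1
  apply Set.Subset.antisymm
  · -- D ⊆ Done
    intro δ hδ
    obtain ⟨δ', hδ', hsub⟩ := hre δ hδ
    rcases hδ' with ⟨t, ht, rfl⟩ | ⟨p, hp, hp1, rfl⟩
    · have hsplit := AD_split hD hre hδ ht hsub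
      rw [hsplit]
      exact Or.inl ⟨t, ht, rfl⟩
    · obtain ⟨q, hq⟩ := (hne δ hδ).1
      have hδp : δ = {p} := by
        refine Set.Subset.antisymm hsub ?_
        have hqp := hsub hq
        rw [Set.mem_singleton_iff] at hqp
        intro r hr
        rw [Set.mem_singleton_iff] at hr
        rw [hr, ← hqp]
        exact hq
      rw [hδp]
      exact Or.inr ⟨p, hp, hp1, rfl⟩
  · -- Done ⊆ D
    rintro δ' (⟨t, ht, rfl⟩ | ⟨p, hp, hp1, rfl⟩)
    · have hmem : ((0:ℝ), t, 0) ∈ Kzero :=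
        ADseg_subset_Kzero ht (mem_ADseg.mpr ⟨rfl, rfl, le_refl 0, zero_le_one⟩)
      have hmem' : ((0:ℝ), t, 0) ∈ ⋃₀ D := hcover.symm ▸ hmem
      obtain ⟨δ, hδ, hpd⟩ := hmem'
      obtain ⟨δ'', hδ'', hsub⟩ := hre δ hδ
      rcases hδ'' with ⟨t'', ht'', rfl⟩ | ⟨q, hq, hq1, rfl⟩
      · have htt : t = t'' := (mem_ADseg.mp (hsub hpd)).2.1
        rw [← htt] at hsub
        have hsplit := AD_split hD hre hδ ht hsub
        show ADseg t ∈ D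
        rw [← hsplit]
        exact hδ
      · have hpe := hsub hpd
        rw [Set.mem_singleton_iff] at hpe
        rw [← hpe] at hq1
        exact absurd hq1 (lt_irrefl 0)
    · have hmem' : p ∈ ⋃₀ D := hcover.symm ▸ hp
      obtain ⟨δ, hδ, hpd⟩ := hmem'
      obtain ⟨δ'', hδ'', hsub⟩ := hre δ hδ
      rcases hδ'' with ⟨t'', ht'', rfl⟩ | ⟨q, hq, hq1, rfl⟩
      · have h0 := (mem_ADseg.mp (hsub hpd)).1
        rw [h0] at hp1
        exact absurd hp1 (lt_irrefl 0)
      · have hpq : p = q := by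
          have := hsub hpd
          rwa [Set.mem_singleton_iff] at this
        subst hpq
        have hδp : δ = {p} := by
          refine Set.Subset.antisymm hsub ?_
          intro r hr
          rw [Set.mem_singleton_iff] at hr
          rw [hr]
          exact hpd
        rw [← hδp]
        exact hδ
end
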